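/- arXiv:math/0111285 — 8 statements merged into one kernel-verified Lean document; each statement's English description precedes it below -/
import Mathlib

section
/- Let a < 0 < b and let y ∈ C³(ℝ,ℝ) satisfy: x·y(x) < 0 for all x ≠ 0; y is bounded below and has at most one critical point, which, if it exists, is a local extremum of y; y'(0) = a and y''(0) = 2b; and the Schwarzian derivative (Sy)(x) < 0 for every x with y'(x) ≠ 0. Then r(x;a,b) < y(x) for all x > 0, and r(x;a,b) > y(x) for all x ∈ (a/b, 0). -/
open Real Set

/-- Schwarzian derivative of `f` at `x`. -/
noncomputable def Schwarzian (f : ℝ → ℝ) (x : ℝ) : ℝ :=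
  iteratedDeriv 3 f x / deriv f x - (3 / 2) * (iteratedDeriv 2 f x / deriv f x) ^ 2

/-- Hypotheses (H1)-(H3): `f ∈ C³`, negative feedback with `f'(0) < 0`,
boundedness below, at most one critical point which is a local extremum,
and negative Schwarzian wherever `f' ≠ 0`. -/
def HypH (f : ℝ → ℝ) : Prop :=
  ContDiff ℝ 3 f ∧
  (∀ x : ℝ, x ≠ 0 → x * f x < 0) ∧
  deriv f 0 < 0 ∧
  (∃ C : ℝ, ∀ x : ℝ, C ≤ f x) ∧
  (∀ u v : ℝ, deriv f u = 0 → deriv f v = 0 → u = v) ∧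
  (∀ u : ℝ, deriv f u = 0 → IsLocalExtr f u) ∧
  (∀ u : ℝ, deriv f u ≠ 0 → Schwarzian f u < 0)

lemma aux_sqrt_inv_deriv (u : ℝ → ℝ) (v' x : ℝ) (hu : HasDerivAt u v' x) (hx : u x < 0) :
    HasDerivAt (fun t => (Real.sqrt (-(u t)))⁻¹) (v' / (2 * Real.sqrt (-(u x)) ^ 3)) x := by
  have hpos : 0 < -(u x) := by linarith
  have hs : 0 < Real.sqrt (-(u x)) := Real.sqrt_pos.mpr hpos
  have h1 : HasDerivAt (fun t => -(u t)) (-v') x := hu.neg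
  have h2 := h1.sqrt (ne_of_gt hpos)
  have h3 := h2.inv (ne_of_gt hs)
  refine h3.congr_deriv ?_
  set s := Real.sqrt (-(u x)) with hsdef
  clear_value s
  ring

lemma aux_g1_deriv (u v : ℝ → ℝ) (w' x : ℝ) (hu : HasDerivAt u (v x) x)
    (hv : HasDerivAt v w' x) (hx : u x < 0) :
    HasDerivAt (fun t => v t / (2 * Real.sqrt (-(u t)) ^ 3))
      ((2 * w' * Real.sqrt (-(u x)) ^ 2 + 3 * v x ^ 2) / (4 * Real.sqrt (-(u x)) ^ 5)) x := by
  have hpos : 0 < -(u x) := by linarith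
  have hs : 0 < Real.sqrt (-(u x)) := Real.sqrt_pos.mpr hpos
  have h1 : HasDerivAt (fun t => -(u t)) (-(v x)) x := hu.neg
  have h2 := h1.sqrt (ne_of_gt hpos)
  have h3 : HasDerivAt (fun t => Real.sqrt (-(u t)) ^ 3)
      (3 * Real.sqrt (-(u x)) ^ 2 * (-(v x) / (2 * Real.sqrt (-(u x))))) x := by
    exact (h2.pow 3).congr_deriv (by norm_num)
  have h4 : HasDerivAt (fun t => 2 * Real.sqrt (-(u t)) ^ 3)
      (2 * (3 * Real.sqrt (-(u x)) ^ 2 * (-(v x) / (2 * Real.sqrt (-(u x)))))) x :=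
    h3.const_mul 2
  have hden : 2 * Real.sqrt (-(u x)) ^ 3 ≠ 0 := by positivity
  have h5 := hv.div h4 hden
  refine h5.congr_deriv ?_
  set s := Real.sqrt (-(u x)) with hsdef
  clear_value s
  field_simp
  ring

lemma r_hasDerivAt (a b t : ℝ) (h : a - b * t ≠ 0) :
    HasDerivAt (fun s => a ^ 2 * s / (a - b * s)) (a ^ 3 / (a - b * t) ^ 2) t := by
  have h1 : HasDerivAt (fun s : ℝ => a ^ 2 * s) (a ^ 2) t := by
    simpa using (hasDerivAt_id t).const_mul (a ^ 2)
  have h2 : HasDerivAt (fun s : ℝ => a - b * s) (-b) t := by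
    simpa using ((hasDerivAt_id t).const_mul b).const_sub a
  have h3 := h1.div h2 h
  refine h3.congr_deriv ?_
  rw [div_eq_div_iff (by positivity) (by positivity)]
  ring

set_option maxHeartbeats 1000000 in
/-- Core comparison: negative Schwarzian forces `y' > r'` on intervals where `y' < 0`. -/
lemma comp_lemma (a b : ℝ) (ha : a < 0) (hb : 0 < b) (y : ℝ → ℝ)
    (hy : ContDiff ℝ 3 y)
    (hy' : deriv y 0 = a) (hy'' : iteratedDeriv 2 y 0 = 2 * b)
    (hS : ∀ u : ℝ, deriv y u ≠ 0 → Schwarzian y u < 0)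
    (p q : ℝ) (hp : a / b < p) (hp0 : p ≤ 0) (h0q : 0 ≤ q)
    (hneg : ∀ t ∈ Icc p q, deriv y t < 0) :
    ∀ t ∈ Icc p q, t ≠ 0 → a ^ 3 / (a - b * t) ^ 2 < deriv y t := by
  set u : ℝ → ℝ := deriv y with hudef
  set v : ℝ → ℝ := deriv u with hvdef
  set w : ℝ → ℝ := deriv v with hwdef
  have h3eq : (3 : WithTop ℕ∞) = 2 + 1 := by norm_num
  have hu2 : ContDiff ℝ 2 u := by
    rw [h3eq] at hy; exact (contDiff_succ_iff_deriv.mp hy).2.2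
  have h2eq : (2 : WithTop ℕ∞) = 1 + 1 := by norm_num
  have hv1 : ContDiff ℝ 1 v := by
    rw [h2eq] at hu2; exact (contDiff_succ_iff_deriv.mp hu2).2.2
  have hud : ∀ x : ℝ, HasDerivAt u (v x) x := fun x =>
    ((hu2.differentiable (by norm_num)) x).hasDerivAt
  have hvd : ∀ x : ℝ, HasDerivAt v (w x) x := fun x =>
    ((hv1.differentiable one_ne_zero) x).hasDerivAt
  have hit2 : iteratedDeriv 2 y = v := by
    rw [iteratedDeriv_succ, iteratedDeriv_one]
  have hit3 : iteratedDeriv 3 y = w := by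
    rw [iteratedDeriv_succ, hit2]
  have hu0 : u 0 = a := hy'
  have hv0 : v 0 = 2 * b := by rw [← hit2]; exact hy''
  have hna : (0:ℝ) < -a := by linarith
  set s0 : ℝ := Real.sqrt (-a) with hs0def
  have hs0 : 0 < s0 := Real.sqrt_pos.mpr hna
  have hs0sq : s0 ^ 2 = -a := Real.sq_sqrt hna.le
  set φ : ℝ → ℝ := fun t => (Real.sqrt (-(u t)))⁻¹ - (b * t - a) / s0 ^ 3 with hφdef
  set φ1 : ℝ → ℝ := fun t => v t / (2 * Real.sqrt (-(u t)) ^ 3) - b / s0 ^ 3 with hφ1def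
  have hGd : ∀ t : ℝ, HasDerivAt (fun t : ℝ => (b * t - a) / s0 ^ 3) (b / s0 ^ 3) t := by
    intro t
    have : HasDerivAt (fun t : ℝ => b * t - a) b t := by
      simpa using ((hasDerivAt_id t).const_mul b).sub_const a
    simpa using this.div_const (s0 ^ 3)
  have hφd : ∀ t ∈ Icc p q, HasDerivAt φ (φ1 t) t := by
    intro t ht
    exact (aux_sqrt_inv_deriv u (v t) t (hud t) (hneg t ht)).sub (hGd t)
  have hφ1d : ∀ t ∈ Icc p q, HasDerivAt φ1
      ((2 * w t * Real.sqrt (-(u t)) ^ 2 + 3 * v t ^ 2) / (4 * Real.sqrt (-(u t)) ^ 5)) t := by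
    intro t ht
    exact (aux_g1_deriv u v (w t) t (hud t) (hvd t) (hneg t ht)).sub_const _
  have hg2pos : ∀ t ∈ Icc p q,
      0 < (2 * w t * Real.sqrt (-(u t)) ^ 2 + 3 * v t ^ 2) / (4 * Real.sqrt (-(u t)) ^ 5) := by
    intro t ht
    have hut : u t < 0 := hneg t ht
    have hune : u t ≠ 0 := ne_of_lt hut
    have hS' := hS t hune
    rw [Schwarzian, hit3, hit2] at hS'
    set st := Real.sqrt (-(u t)) with hstdef
    have hst : 0 < st := Real.sqrt_pos.mpr (by linarith)
    have hstsq : st ^ 2 = -(u t) := Real.sq_sqrt (by linarith)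
    have hu2pos : 0 < u t ^ 2 := by positivity
    have hkey : w t * u t < 3 / 2 * v t ^ 2 := by
      have h4 := mul_lt_mul_of_pos_right hS' hu2pos
      rw [zero_mul] at h4
      have h5 : (w t / u t - 3 / 2 * (v t / u t) ^ 2) * u t ^ 2
          = w t * u t - 3 / 2 * v t ^ 2 := by
        field_simp
      rw [h5] at h4
      linarith
    have hnum : 0 < 2 * w t * st ^ 2 + 3 * v t ^ 2 := by
      rw [hstsq]; nlinarith [hkey]
    positivity
  have hφ10 : φ1 0 = 0 := by
    simp only [hφ1def, hu0, hv0]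
    rw [← hs0def]
    field_simp
    ring
  have hφ0 : φ 0 = 0 := by
    simp only [hφdef, hu0, mul_zero, zero_sub]
    rw [← hs0def, ← hs0sq]
    field_simp
    ring
  have h0mem : (0:ℝ) ∈ Icc p q := ⟨hp0, h0q⟩
  have hmono1 : StrictMonoOn φ1 (Icc p q) := by
    apply strictMonoOn_of_deriv_pos (convex_Icc p q)
    · exact fun t ht => ((hφ1d t ht).continuousAt).continuousWithinAt
    · intro t ht
      rw [interior_Icc] at ht
      rw [(hφ1d t (Ioo_subset_Icc_self ht)).deriv]
      exact hg2pos t (Ioo_subset_Icc_self ht)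
  have hφpos : ∀ t ∈ Icc p q, t ≠ 0 → 0 < φ t := by
    intro t ht htne
    rcases lt_or_gt_of_ne htne with ht0 | ht0
    · -- t < 0 : φ strictly decreasing on [p,0]
      have hanti : StrictAntiOn φ (Icc p 0) := by
        apply strictAntiOn_of_deriv_neg (convex_Icc p 0)
        · intro s hs
          exact ((hφd s ⟨hs.1, le_trans hs.2 h0q⟩).continuousAt).continuousWithinAt
        · intro s hs
          rw [interior_Icc] at hs
          rw [(hφd s ⟨hs.1.le, le_trans hs.2.le h0q⟩).deriv]
          have := hmono1 ⟨hs.1.le, le_trans hs.2.le h0q⟩ h0mem hs.2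
          rw [hφ10] at this; exact this
      have := hanti ⟨ht.1, ht0.le⟩ ⟨hp0, le_rfl⟩ ht0
      rw [hφ0] at this; exact this
    · -- 0 < t : φ strictly increasing on [0,q]
      have hmono : StrictMonoOn φ (Icc 0 q) := by
        apply strictMonoOn_of_deriv_pos (convex_Icc 0 q)
        · intro s hs
          exact ((hφd s ⟨le_trans hp0 hs.1, hs.2⟩).continuousAt).continuousWithinAt
        · intro s hs
          rw [interior_Icc] at hs
          rw [(hφd s ⟨le_trans hp0 hs.1.le, hs.2.le⟩).deriv]
          have := hmono1 h0mem ⟨le_trans hp0 hs.1.le, hs.2.le⟩ hs.1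
          rw [hφ10] at this; exact this
      have := hmono ⟨le_rfl, h0q⟩ ⟨ht0.le, ht.2⟩ ht0
      rw [hφ0] at this; exact this
  intro t ht htne
  have hφt := hφpos t ht htne
  have hut : u t < 0 := hneg t ht
  set st := Real.sqrt (-(u t)) with hstdef
  have hst : 0 < st := Real.sqrt_pos.mpr (by linarith)
  have hstsq : st ^ 2 = -(u t) := Real.sq_sqrt (by linarith)
  have hbt : 0 < b * t - a := by
    have h1 : a < t * b := (div_lt_iff₀ hb).mp (lt_of_lt_of_le hp ht.1)
    nlinarith
  have h1 : (b * t - a) / s0 ^ 3 < st⁻¹ := by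
    have : 0 < φ t := hφt
    simp only [hφdef] at this
    rw [← hstdef] at this
    linarith
  rw [inv_eq_one_div] at h1
  have h2 : (b * t - a) * st < s0 ^ 3 := by
    have := (div_lt_div_iff₀ (by positivity) hst).mp h1
    linarith
  have h3 : ((b * t - a) * st) ^ 2 < (s0 ^ 3) ^ 2 :=
    pow_lt_pow_left₀ h2 (by positivity) (by norm_num)
  have hL : ((b * t - a) * st) ^ 2 = (b * t - a) ^ 2 * (-(u t)) := by
    rw [mul_pow, hstsq]
  have hR : (s0 ^ 3) ^ 2 = (-a) ^ 3 := by
    rw [← hs0sq]; ring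
  have h4 : (b * t - a) ^ 2 * (-(u t)) < (-a) ^ 3 := by
    rw [← hL, ← hR]; exact h3
  have hbt2 : 0 < (a - b * t) ^ 2 := by nlinarith [hbt]
  rw [div_lt_iff₀ hbt2]
  nlinarith [h4]

lemma psi_right (a b : ℝ) (ha : a < 0) (hb : 0 < b) (y : ℝ → ℝ)
    (hy : ContDiff ℝ 3 y) (hy0 : y 0 = 0) (x : ℝ) (hx : 0 < x)
    (hcmp : ∀ t ∈ Ioo 0 x, a ^ 3 / (a - b * t) ^ 2 < deriv y t) :
    a ^ 2 * x / (a - b * x) < y x := by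
  set ψ : ℝ → ℝ := fun t => y t - a ^ 2 * t / (a - b * t) with hψdef
  have hne : ∀ t ∈ Icc 0 x, a - b * t ≠ 0 := by
    intro t ht
    have : a - b * t < 0 := by nlinarith [ht.1]
    exact ne_of_lt this
  have hcont : ContinuousOn ψ (Icc 0 x) := by
    apply (hy.continuous.continuousOn).sub
    exact ContinuousOn.div (by fun_prop) (by fun_prop) hne
  have hmono : StrictMonoOn ψ (Icc 0 x) := by
    apply strictMonoOn_of_deriv_pos (convex_Icc 0 x) hcont
    intro t ht
    rw [interior_Icc] at ht
    have hne' : a - b * t ≠ 0 := hne t (Ioo_subset_Icc_self ht)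
    have hd : HasDerivAt ψ (deriv y t - a ^ 3 / (a - b * t) ^ 2) t :=
      ((hy.differentiable (by norm_num) t).hasDerivAt).sub (r_hasDerivAt a b t hne')
    rw [hd.deriv]
    have := hcmp t ht
    linarith
  have h := hmono (left_mem_Icc.mpr hx.le) (right_mem_Icc.mpr hx.le) hx
  have h0 : ψ 0 = 0 := by simp [hψdef, hy0]
  rw [h0] at h
  simp only [hψdef] at h
  linarith

lemma psi_left (a b : ℝ) (ha : a < 0) (hb : 0 < b) (y : ℝ → ℝ)
    (hy : ContDiff ℝ 3 y) (hy0 : y 0 = 0) (x : ℝ) (hax : a / b < x) (hx : x < 0)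
    (hcmp : ∀ t ∈ Ioo x 0, a ^ 3 / (a - b * t) ^ 2 < deriv y t) :
    y x < a ^ 2 * x / (a - b * x) := by
  set ψ : ℝ → ℝ := fun t => y t - a ^ 2 * t / (a - b * t) with hψdef
  have habx : a < x * b := (div_lt_iff₀ hb).mp hax
  have hne : ∀ t ∈ Icc x 0, a - b * t ≠ 0 := by
    intro t ht
    have h1 : b * x ≤ b * t := mul_le_mul_of_nonneg_left ht.1 hb.le
    have : a - b * t < 0 := by nlinarith
    exact ne_of_lt this
  have hcont : ContinuousOn ψ (Icc x 0) := by
    apply (hy.continuous.continuousOn).sub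
    exact ContinuousOn.div (by fun_prop) (by fun_prop) hne
  have hmono : StrictMonoOn ψ (Icc x 0) := by
    apply strictMonoOn_of_deriv_pos (convex_Icc x 0) hcont
    intro t ht
    rw [interior_Icc] at ht
    have hne' : a - b * t ≠ 0 := hne t (Ioo_subset_Icc_self ht)
    have hd : HasDerivAt ψ (deriv y t - a ^ 3 / (a - b * t) ^ 2) t :=
      ((hy.differentiable (by norm_num) t).hasDerivAt).sub (r_hasDerivAt a b t hne')
    rw [hd.deriv]
    have := hcmp t ht
    linarith
  have h := hmono (left_mem_Icc.mpr hx.le) (right_mem_Icc.mpr hx.le) hx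
  have h0 : ψ 0 = 0 := by simp [hψdef, hy0]
  rw [h0] at h
  simp only [hψdef] at h
  linarith

lemma y_zero (y : ℝ → ℝ) (hy : Continuous y)
    (hfeed : ∀ x : ℝ, x ≠ 0 → x * y x < 0) : y 0 = 0 := by
  have hle : y 0 ≤ 0 := by
    have hc : Filter.Tendsto y (nhdsWithin 0 (Ioi 0)) (nhds (y 0)) :=
      (hy.continuousAt.continuousWithinAt).tendsto
    refine le_of_tendsto hc ?_
    filter_upwards [self_mem_nhdsWithin] with t ht
    have h1 := hfeed t (ne_of_gt ht)
    have ht' : (0:ℝ) < t := ht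
    nlinarith
  have hge : 0 ≤ y 0 := by
    have hc : Filter.Tendsto y (nhdsWithin 0 (Iio 0)) (nhds (y 0)) :=
      (hy.continuousAt.continuousWithinAt).tendsto
    refine ge_of_tendsto hc ?_
    filter_upwards [self_mem_nhdsWithin] with t ht
    have h1 := hfeed t (ne_of_lt ht)
    have ht' : t < (0:ℝ) := ht
    nlinarith
  linarith

set_option maxHeartbeats 1000000 in
/-- Lemma 2.1: every `y ∈ K_{a,b}` with strictly negative Schwarzian lies strictly
above `r(·;a,b)` on `(0, ∞)` and strictly below it on `(a/b, 0)`. -/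
theorem rational_minorant_majorant
    (a b : ℝ) (ha : a < 0) (hb : 0 < b) (y : ℝ → ℝ)
    (hy : ContDiff ℝ 3 y)
    (hfeed : ∀ x : ℝ, x ≠ 0 → x * y x < 0)
    (hbdd : ∃ C : ℝ, ∀ x : ℝ, C ≤ y x)
    (hcrit₁ : ∀ u v : ℝ, deriv y u = 0 → deriv y v = 0 → u = v)
    (hcrit₂ : ∀ u : ℝ, deriv y u = 0 → IsLocalExtr y u)
    (hy' : deriv y 0 = a) (hy'' : iteratedDeriv 2 y 0 = 2 * b)
    (hS : ∀ u : ℝ, deriv y u ≠ 0 → Schwarzian y u < 0) :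
    (∀ x : ℝ, 0 < x → a ^ 2 * x / (a - b * x) < y x) ∧
    (∀ x : ℝ, a / b < x → x < 0 → a ^ 2 * x / (a - b * x) > y x) := by
  have hy0 : y 0 = 0 := y_zero y hy.continuous hfeed
  have hab0 : a / b < 0 := div_neg_of_neg_of_pos ha hb
  have hcu : Continuous (deriv y) := by
    have h3eq : (3 : WithTop ℕ∞) = 2 + 1 := by norm_num
    have hy3 := hy
    rw [h3eq] at hy3
    exact ((contDiff_succ_iff_deriv.mp hy3).2.2).continuous
  -- IVT helpers
  have hloc1 : ∀ α β : ℝ, α ≤ β → deriv y α < 0 → 0 ≤ deriv y β →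
      ∃ z ∈ Icc α β, deriv y z = 0 := by
    intro α β hab hα hβ
    have h := intermediate_value_Icc hab hcu.continuousOn
    obtain ⟨z, hz, hz0⟩ := h ⟨hα.le, hβ⟩
    exact ⟨z, hz, hz0⟩
  have hloc2 : ∀ α β : ℝ, α ≤ β → 0 ≤ deriv y α → deriv y β < 0 →
      ∃ z ∈ Icc α β, deriv y z = 0 := by
    intro α β hab hα hβ
    have h := intermediate_value_Icc' hab hcu.continuousOn
    obtain ⟨z, hz, hz0⟩ := h ⟨hβ.le, hα⟩
    exact ⟨z, hz, hz0⟩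
  -- monotonicity builders
  have hymono : ∀ p q : ℝ, (∀ t ∈ Ioo p q, 0 < deriv y t) → StrictMonoOn y (Icc p q) := by
    intro p q h
    apply strictMonoOn_of_deriv_pos (convex_Icc p q) hy.continuous.continuousOn
    rw [interior_Icc]; exact h
  have hyanti : ∀ p q : ℝ, (∀ t ∈ Ioo p q, deriv y t < 0) → StrictAntiOn y (Icc p q) := by
    intro p q h
    apply strictAntiOn_of_deriv_neg (convex_Icc p q) hy.continuous.continuousOn
    rw [interior_Icc]; exact h
  have ha2 : 0 < a ^ 2 := by nlinarith
  have ha3 : a ^ 3 < 0 := by nlinarith [mul_neg_of_neg_of_pos ha ha2]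
  have hranti : ∀ p q : ℝ, a / b < p →
      StrictAntiOn (fun s => a ^ 2 * s / (a - b * s)) (Icc p q) := by
    intro p q hpq
    have hne : ∀ t ∈ Icc p q, a - b * t ≠ 0 := by
      intro t ht
      have h1 : a < p * b := (div_lt_iff₀ hb).mp hpq
      have h2 : b * p ≤ b * t := mul_le_mul_of_nonneg_left ht.1 hb.le
      have : a - b * t < 0 := by nlinarith
      exact ne_of_lt this
    apply strictAntiOn_of_deriv_neg (convex_Icc p q)
    · exact ContinuousOn.div (by fun_prop) (by fun_prop) hne
    · intro t ht
      rw [interior_Icc] at ht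
      have hne' := hne t (Ioo_subset_Icc_self ht)
      rw [(r_hasDerivAt a b t hne').deriv]
      have h2 : 0 < (a - b * t) ^ 2 := by
        rcases hne'.lt_or_gt with h | h <;> nlinarith
      exact div_neg_of_neg_of_pos ha3 h2
  constructor
  · -- right side : 0 < x
    intro x hx
    by_cases hall : ∀ t ∈ Icc 0 x, deriv y t < 0
    · refine psi_right a b ha hb y hy hy0 x hx ?_
      intro t ht
      exact comp_lemma a b ha hb y hy hy' hy'' hS 0 x hab0 le_rfl hx.le hall t
        ⟨ht.1.le, ht.2.le⟩ (ne_of_gt ht.1)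
    · push_neg at hall
      obtain ⟨t₀, ht₀, ht₀'⟩ := hall
      obtain ⟨c, hc, hc0⟩ := hloc1 0 t₀ ht₀.1 (by rw [hy']; exact ha) ht₀'
      have hcpos : 0 < c := by
        rcases hc.1.lt_or_eq with h | h
        · exact h
        · exfalso; rw [← h, hy'] at hc0; linarith
      have hcx : c ≤ x := le_trans hc.2 ht₀.2
      have huneg : ∀ t ∈ Ico 0 c, deriv y t < 0 := by
        intro t ht
        by_contra h
        push_neg at h
        have ht0 : 0 < t := by
          rcases ht.1.lt_or_eq with h' | h'
          · exact h'
          · exfalso; rw [← h', hy'] at h; linarith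
        obtain ⟨z, hz, hz0⟩ := hloc1 0 t ht0.le (by rw [hy']; exact ha) h
        have : z = c := hcrit₁ z c hz0 hc0
        rw [this] at hz
        exact absurd hz.2 (not_le.mpr ht.2)
      have hcmp : ∀ t ∈ Ioo 0 c, a ^ 3 / (a - b * t) ^ 2 < deriv y t := by
        intro t ht
        exact comp_lemma a b ha hb y hy hy' hy'' hS 0 t hab0 le_rfl ht.1.le
          (fun s hs => huneg s ⟨hs.1, lt_of_le_of_lt hs.2 ht.2⟩) t
          ⟨ht.1.le, le_rfl⟩ (ne_of_gt ht.1)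
      by_cases hxc : x ≤ c
      · refine psi_right a b ha hb y hy hy0 x hx ?_
        intro t ht
        exact hcmp t ⟨ht.1, lt_of_lt_of_le ht.2 hxc⟩
      · push_neg at hxc
        have hyc : a ^ 2 * c / (a - b * c) < y c := psi_right a b ha hb y hy hy0 c hcpos hcmp
        have hupos : ∀ t ∈ Ioc c x, 0 < deriv y t := by
          intro t ht
          have htne : deriv y t ≠ 0 := fun h0 => absurd (hcrit₁ t c h0 hc0) (ne_of_gt ht.1)
          rcases htne.lt_or_gt with hut | hut
          swap
          · exact hut
          exfalso
          have hneg2 : ∀ s ∈ Ioo c t, deriv y s < 0 := by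
            intro s hs
            have hsne : deriv y s ≠ 0 := fun h0 => absurd (hcrit₁ s c h0 hc0) (ne_of_gt hs.1)
            rcases hsne.lt_or_gt with h | h
            · exact h
            · exfalso
              obtain ⟨z, hz, hz0⟩ := hloc2 s t hs.2.le h.le hut
              have : z = c := hcrit₁ z c hz0 hc0
              rw [this] at hz
              linarith [hz.1, hs.1]
          have hanti : StrictAntiOn y (Icc c t) := hyanti c t hneg2
          rcases hcrit₂ c hc0 with hmin | hmax
          · obtain ⟨ε, hε, hmin'⟩ := Metric.eventually_nhds_iff.mp hmin
            set s := min (c + ε / 2) t with hsdef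
            have hs1 : c < s := lt_min (by linarith) ht.1
            have hs2 : s ≤ t := min_le_right _ _
            have hd : dist s c < ε := by
              rw [Real.dist_eq, abs_lt]
              constructor
              · linarith
              · have := min_le_left (c + ε / 2) t; linarith
            have h1 := hmin' hd
            have h2 := hanti ⟨le_rfl, ht.1.le⟩ ⟨hs1.le, hs2⟩ hs1
            linarith
          · have hanti0 : StrictAntiOn y (Icc 0 c) :=
              hyanti 0 c (fun s hs => huneg s ⟨hs.1.le, hs.2⟩)
            obtain ⟨ε, hε, hmax'⟩ := Metric.eventually_nhds_iff.mp hmax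
            set s := max (c - ε / 2) (c / 2) with hsdef
            have hs1 : s < c := max_lt (by linarith) (by linarith)
            have hs2 : 0 ≤ s := le_trans (by linarith) (le_max_right _ _)
            have hd : dist s c < ε := by
              rw [Real.dist_eq, abs_lt]
              constructor
              · have := le_max_left (c - ε / 2) (c / 2); linarith
              · linarith
            have h1 := hmax' hd
            have h2 := hanti0 ⟨hs2, hs1.le⟩ ⟨hcpos.le, le_rfl⟩ hs1
            linarith
        have hmono : StrictMonoOn y (Icc c x) :=
          hymono c x (fun t ht => hupos t ⟨ht.1, ht.2.le⟩)
        have h1 : y c < y x := hmono ⟨le_rfl, hcx⟩ ⟨hcx, le_rfl⟩ hxc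
        have h2 := hranti c x (lt_trans hab0 hcpos) ⟨le_rfl, hcx⟩ ⟨hcx, le_rfl⟩ hxc
        simp only at h2
        linarith
  · -- left side : a/b < x < 0
    intro x hax hx
    by_cases hall : ∀ t ∈ Icc x 0, deriv y t < 0
    · refine psi_left a b ha hb y hy hy0 x hax hx ?_
      intro t ht
      exact comp_lemma a b ha hb y hy hy' hy'' hS x 0 hax hx.le le_rfl hall t
        ⟨ht.1.le, ht.2.le⟩ (ne_of_lt ht.2)
    · push_neg at hall
      obtain ⟨t₀, ht₀, ht₀'⟩ := hall
      obtain ⟨c, hc, hc0⟩ := hloc2 t₀ 0 ht₀.2 ht₀' (by rw [hy']; exact ha)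
      have hcneg : c < 0 := by
        rcases hc.2.lt_or_eq with h | h
        · exact h
        · exfalso; rw [h, hy'] at hc0; linarith
      have hxc : x ≤ c := le_trans ht₀.1 hc.1
      have hac : a / b < c := lt_of_lt_of_le hax hxc
      have huneg : ∀ t ∈ Ioc c 0, deriv y t < 0 := by
        intro t ht
        by_contra h
        push_neg at h
        have ht0 : t < 0 := by
          rcases ht.2.lt_or_eq with h' | h'
          · exact h'
          · exfalso; rw [h', hy'] at h; linarith
        obtain ⟨z, hz, hz0⟩ := hloc2 t 0 ht0.le h (by rw [hy']; exact ha)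
        have : z = c := hcrit₁ z c hz0 hc0
        rw [this] at hz
        exact absurd hz.1 (not_le.mpr ht.1)
      have hcmp : ∀ t ∈ Ioo c 0, a ^ 3 / (a - b * t) ^ 2 < deriv y t := by
        intro t ht
        refine comp_lemma a b ha hb y hy hy' hy'' hS t 0
          (lt_of_lt_of_le hac ht.1.le) ht.2.le le_rfl ?_ t ⟨le_rfl, ht.2.le⟩ (ne_of_lt ht.2)
        intro s hs
        rcases hs.2.lt_or_eq with h' | h'
        · exact huneg s ⟨lt_of_lt_of_le ht.1 hs.1, h'.le⟩
        · rw [h', hy']; exact ha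
      by_cases hcx' : c ≤ x
      · refine psi_left a b ha hb y hy hy0 x hax hx ?_
        intro t ht
        exact hcmp t ⟨lt_of_le_of_lt hcx' ht.1, ht.2⟩
      · push_neg at hcx'
        have hyc : y c < a ^ 2 * c / (a - b * c) :=
          psi_left a b ha hb y hy hy0 c hac hcneg hcmp
        have hupos : ∀ t ∈ Ico x c, 0 < deriv y t := by
          intro t ht
          have htne : deriv y t ≠ 0 := fun h0 => absurd (hcrit₁ t c h0 hc0) (ne_of_lt ht.2)
          rcases htne.lt_or_gt with hut | hut
          swap
          · exact hut
          exfalso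
          have hneg2 : ∀ s ∈ Ioo t c, deriv y s < 0 := by
            intro s hs
            have hsne : deriv y s ≠ 0 := fun h0 => absurd (hcrit₁ s c h0 hc0) (ne_of_lt hs.2)
            rcases hsne.lt_or_gt with h | h
            · exact h
            · exfalso
              obtain ⟨z, hz, hz0⟩ := hloc1 t s hs.1.le hut h.le
              have : z = c := hcrit₁ z c hz0 hc0
              rw [this] at hz
              linarith [hz.2, hs.2]
          have hanti : StrictAntiOn y (Icc t c) := hyanti t c hneg2
          rcases hcrit₂ c hc0 with hmin | hmax
          · have hanti0 : StrictAntiOn y (Icc c 0) :=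
              hyanti c 0 (fun s hs => huneg s ⟨hs.1, hs.2.le⟩)
            obtain ⟨ε, hε, hmin'⟩ := Metric.eventually_nhds_iff.mp hmin
            set s := min (c + ε / 2) (c / 2) with hsdef
            have hs1 : c < s := lt_min (by linarith) (by linarith)
            have hs2 : s ≤ 0 := le_trans (min_le_right _ _) (by linarith)
            have hd : dist s c < ε := by
              rw [Real.dist_eq, abs_lt]
              constructor
              · linarith
              · have := min_le_left (c + ε / 2) (c / 2); linarith
            have h1 := hmin' hd
            have h2 := hanti0 ⟨le_rfl, hcneg.le⟩ ⟨hs1.le, hs2⟩ hs1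
            linarith
          · obtain ⟨ε, hε, hmax'⟩ := Metric.eventually_nhds_iff.mp hmax
            set s := max (c - ε / 2) t with hsdef
            have hs1 : s < c := max_lt (by linarith) ht.2
            have hs2 : t ≤ s := le_max_right _ _
            have hd : dist s c < ε := by
              rw [Real.dist_eq, abs_lt]
              constructor
              · have := le_max_left (c - ε / 2) t; linarith
              · linarith
            have h1 := hmax' hd
            have h2 := hanti ⟨hs2, hs1.le⟩ ⟨ht.2.le, le_rfl⟩ hs1
            linarith
        have hmono : StrictMonoOn y (Icc x c) :=
          hymono x c (fun t ht => hupos t ⟨ht.1.le, ht.2⟩)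
        have h1 : y x < y c := hmono ⟨le_rfl, hcx'.le⟩ ⟨hcx'.le, le_rfl⟩ hcx'
        have h2 := hranti x c hax ⟨le_rfl, hcx'.le⟩ ⟨hcx'.le, le_rfl⟩ hcx'
        simp only at h2
        linarith
end

section
/- Let f : ℝ → ℝ be three times continuously differentiable, satisfy hypotheses (H1)–(H3), and suppose f''(0) < 0. Then f is bounded on ℝ (it is bounded above as well as below). -/
open Real Set

private lemma iterderiv2 (f : ℝ → ℝ) : iteratedDeriv 2 f = deriv (deriv f) := by
  rw [show (2:ℕ) = 1+1 from rfl, iteratedDeriv_succ, iteratedDeriv_one]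

private lemma iterderiv3 (f : ℝ → ℝ) : iteratedDeriv 3 f = deriv (deriv (deriv f)) := by
  rw [show (3:ℕ) = 2+1 from rfl, iteratedDeriv_succ, iterderiv2]

private lemma hasDerivAt_g (f : ℝ → ℝ) (hd1 : Differentiable ℝ (deriv f))
    {x : ℝ} (hx : deriv f x < 0) :
    HasDerivAt (fun y => (Real.sqrt (-(deriv f y)))⁻¹)
      (deriv (deriv f) x / (2 * Real.sqrt (-(deriv f x)) ^ 3)) x := by
  have hpos : 0 < -(deriv f x) := by linarith
  have hs : 0 < Real.sqrt (-(deriv f x)) := Real.sqrt_pos.mpr hpos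
  have hp : HasDerivAt (fun y => -(deriv f y)) (-(deriv (deriv f) x)) x :=
    ((hd1 x).hasDerivAt).neg
  have hsq := hp.sqrt (ne_of_gt hpos)
  have hinv : HasDerivAt (fun y => (Real.sqrt (-(deriv f y)))⁻¹) _ x := hsq.inv (ne_of_gt hs)
  convert hinv using 1
  have h2 : Real.sqrt (-(deriv f x)) ^ 2 = -(deriv f x) := Real.sq_sqrt hpos.le
  simp only [neg_div, neg_neg, div_div]
  ring_nf

private lemma G_deriv (f : ℝ → ℝ) (hd1 : Differentiable ℝ (deriv f))
    (hd2 : Differentiable ℝ (deriv (deriv f)))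
    {x : ℝ} (hx : deriv f x < 0) (hS : Schwarzian f x < 0) :
    ∃ v, HasDerivAt (fun y => deriv (deriv f) y / (2 * Real.sqrt (-(deriv f y)) ^ 3)) v x
      ∧ 0 ≤ v := by
  have hpos : 0 < -(deriv f x) := by linarith
  have hs : 0 < Real.sqrt (-(deriv f x)) := Real.sqrt_pos.mpr hpos
  have hsq2 : Real.sqrt (-(deriv f x)) ^ 2 = -(deriv f x) := Real.sq_sqrt hpos.le
  have hp : HasDerivAt (fun y => -(deriv f y)) (-(deriv (deriv f) x)) x :=
    ((hd1 x).hasDerivAt).neg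
  have hsqrt := hp.sqrt (ne_of_gt hpos)
  have hden : HasDerivAt (fun y => 2 * Real.sqrt (-(deriv f y)) ^ 3)
      (2 * (3 * Real.sqrt (-(deriv f x)) ^ 2 *
        (-(deriv (deriv f) x) / (2 * Real.sqrt (-(deriv f x)))))) x := by
    have := (hsqrt.pow 3).const_mul (2:ℝ)
    norm_num at this ⊢
    convert this using 1
  have hdenne : (2 * Real.sqrt (-(deriv f x)) ^ 3) ≠ 0 := by positivity
  have hnum : HasDerivAt (deriv (deriv f)) (deriv (deriv (deriv f)) x) x := (hd2 x).hasDerivAt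
  refine ⟨_, hnum.div hden hdenne, ?_⟩
  -- nonnegativity
  set s := Real.sqrt (-(deriv f x)) with hsdef
  set d1 := deriv f x
  set d2 := deriv (deriv f) x
  set d3 := deriv (deriv (deriv f)) x
  have hd1ne : d1 ≠ 0 := ne_of_lt hx
  have hkey : d3 * d1 < 3/2 * d2 ^ 2 := by
    have h1 : Schwarzian f x = d3 / d1 - 3/2 * (d2/d1)^2 := by
      rw [Schwarzian, iterderiv2, iterderiv3]
    rw [h1] at hS
    have h2 := mul_neg_of_neg_of_pos hS (pow_pos (abs_pos.mpr hd1ne) 2)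
    rw [sq_abs] at h2
    have h3 : (d3/d1 - 3/2*(d2/d1)^2) * d1^2 = d3*d1 - 3/2*d2^2 := by
      field_simp
    rw [h3] at h2
    linarith
  apply div_nonneg _ (sq_nonneg _)
  have hsne : s ≠ 0 := ne_of_gt hs
  have hnum_eq : d3 * (2*s^3) - d2 * (2*(3*s^2*(-d2/(2*s)))) = s * (3*d2^2 - 2*(d3*d1)) := by
    field_simp
    linear_combination (2*d3) * hsq2
  rw [hnum_eq]
  exact le_of_lt (mul_pos hs (by linarith))

private lemma boundA (f : ℝ → ℝ) (hf : ContDiff ℝ 3 f)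
    (hneg : ∀ x ≤ (0:ℝ), deriv f x < 0)
    (hS : ∀ u : ℝ, deriv f u ≠ 0 → Schwarzian f u < 0)
    (h2 : iteratedDeriv 2 f 0 < 0) :
    ∃ B : ℝ, ∀ x ≤ (0:ℝ), f x ≤ B := by
  have hdf : Differentiable ℝ f := hf.differentiable (by norm_num)
  have hf1 : ContDiff ℝ 2 (deriv f) := by
    rw [show (3 : WithTop ℕ∞) = 2 + 1 from rfl, contDiff_succ_iff_deriv] at hf
    exact hf.2.2
  have hf2 : ContDiff ℝ 1 (deriv (deriv f)) := by
    rw [show (2 : WithTop ℕ∞) = 1 + 1 from rfl, contDiff_succ_iff_deriv] at hf1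
    exact hf1.2.2
  have hd1 : Differentiable ℝ (deriv f) := hf1.differentiable (by norm_num)
  have hd2 : Differentiable ℝ (deriv (deriv f)) := hf2.differentiable (by norm_num)
  set g : ℝ → ℝ := fun y => (Real.sqrt (-(deriv f y)))⁻¹ with hgdef
  set G : ℝ → ℝ := fun y => deriv (deriv f) y / (2 * Real.sqrt (-(deriv f y)) ^ 3) with hGdef
  -- G is monotone on Iic 0
  have hGmono : MonotoneOn G (Iic 0) := by
    apply monotoneOn_of_deriv_nonneg (convex_Iic 0)
    · intro x hx
      obtain ⟨v, hv, -⟩ := G_deriv f hd1 hd2 (hneg x hx) (hS x (ne_of_lt (hneg x hx)))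
      exact hv.differentiableAt.continuousAt.continuousWithinAt
    · rw [interior_Iic]
      intro x hx
      obtain ⟨v, hv, -⟩ := G_deriv f hd1 hd2 (hneg x hx.le) (hS x (ne_of_lt (hneg x hx.le)))
      exact hv.differentiableAt.differentiableWithinAt
    · rw [interior_Iic]
      intro x hx
      obtain ⟨v, hv, hv0⟩ := G_deriv f hd1 hd2 (hneg x hx.le) (hS x (ne_of_lt (hneg x hx.le)))
      rw [hv.deriv]; exact hv0
  set m : ℝ := G 0 with hmdef
  set c : ℝ := g 0 with hcdef
  have h0 : deriv f 0 < 0 := hneg 0 le_rfl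
  have hc : 0 < c := by
    rw [hcdef, hgdef]
    exact inv_pos.mpr (Real.sqrt_pos.mpr (by linarith))
  have hm : m < 0 := by
    rw [hmdef, hGdef]
    simp only
    apply div_neg_of_neg_of_pos
    · rw [← iterderiv2]; exact h2
    · have : 0 < Real.sqrt (-(deriv f 0)) := Real.sqrt_pos.mpr (by linarith)
      positivity
  have hcm : ∀ x ≤ (0:ℝ), 0 < c + m * x := by
    intro x hx
    nlinarith
  -- tangent line bound : g x ≥ c + m x on Iic 0
  have hglin : ∀ x ≤ (0:ℝ), c + m * x ≤ g x := by
    have hφ : AntitoneOn (fun y => g y - (c + m * y)) (Iic 0) := by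
      apply antitoneOn_of_deriv_nonpos (convex_Iic 0)
      · intro x hx
        exact (((hasDerivAt_g f hd1 (hneg x hx)).sub
          (((hasDerivAt_id x).const_mul m).const_add c)).differentiableAt).continuousAt.continuousWithinAt
      · rw [interior_Iic]
        intro x hx
        exact ((hasDerivAt_g f hd1 (hneg x hx.le)).sub
          (((hasDerivAt_id x).const_mul m).const_add c)).differentiableAt.differentiableWithinAt
      · rw [interior_Iic]
        intro x hx
        have hl : HasDerivAt (fun y => c + m * y) m x := by
          simpa using ((hasDerivAt_id x).const_mul m).const_add c
        have hder := (hasDerivAt_g f hd1 (hneg x hx.le)).sub hl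
        have hEq : (fun y => g y - (c + m * y))
            = fun y => (Real.sqrt (-(deriv f y)))⁻¹ - (c + m * y) := by rw [hgdef]
        rw [hEq, (show HasDerivAt (fun y => (Real.sqrt (-(deriv f y)))⁻¹ - (c + m * y)) _ x from hder).deriv]
        have hGle := hGmono (show x ∈ Iic 0 from mem_Iic.mpr hx.le) (show (0:ℝ) ∈ Iic 0 from mem_Iic.mpr le_rfl) hx.le
        rw [hGdef] at hGle
        simp only at hGle
        linarith [hGle]
    intro x hx
    have := hφ (show x ∈ Iic 0 from mem_Iic.mpr hx) (show (0:ℝ) ∈ Iic 0 from mem_Iic.mpr le_rfl) hx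
    simp only [mul_zero, add_zero] at this
    linarith
  -- pointwise derivative lower bound for f
  have hderiv_bound : ∀ x ≤ (0:ℝ), -(deriv f x) ≤ ((c + m * x) ^ 2)⁻¹ := by
    intro x hx
    have hp : 0 < -(deriv f x) := by linarith [hneg x hx]
    have hs : 0 < Real.sqrt (-(deriv f x)) := Real.sqrt_pos.mpr hp
    have hsq2 : Real.sqrt (-(deriv f x)) ^ 2 = -(deriv f x) := Real.sq_sqrt hp.le
    have hg := hglin x hx
    rw [hgdef] at hg
    simp only at hg
    have h1 : Real.sqrt (-(deriv f x)) * (c + m * x) ≤ 1 := by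
      have := mul_le_mul_of_nonneg_left hg hs.le
      rw [mul_inv_cancel₀ (ne_of_gt hs)] at this
      linarith
    have h2' : (Real.sqrt (-(deriv f x)) * (c + m * x)) ^ 2 ≤ 1 := by
      nlinarith [mul_pos hs (hcm x hx)]
    have hEq : (Real.sqrt (-(deriv f x)) * (c + m * x)) ^ 2
        = -deriv f x * (c + m * x) ^ 2 := by rw [mul_pow, hsq2]
    rw [← one_div, le_div_iff₀ (pow_pos (hcm x hx) 2)]
    rw [hEq] at h2'
    linarith
  -- comparison function h
  set h : ℝ → ℝ := fun y => f y - m⁻¹ * (c + m * y)⁻¹ with hhdef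
  have hhd : ∀ x ≤ (0:ℝ), HasDerivAt h
      (deriv f x - m⁻¹ * (-m / (c + m * x) ^ 2)) x := by
    intro x hx
    have hl : HasDerivAt (fun y => c + m * y) m x := by
      simpa using ((hasDerivAt_id x).const_mul m).const_add c
    exact (hdf x).hasDerivAt.sub ((hl.inv (ne_of_gt (hcm x hx))).const_mul m⁻¹)
  have hhmono : MonotoneOn h (Iic 0) := by
    apply monotoneOn_of_deriv_nonneg (convex_Iic 0)
    · intro x hx
      exact (hhd x hx).differentiableAt.continuousAt.continuousWithinAt
    · rw [interior_Iic]
      intro x hx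
      exact (hhd x hx.le).differentiableAt.differentiableWithinAt
    · rw [interior_Iic]
      intro x hx
      rw [(hhd x hx.le).deriv]
      have hb := hderiv_bound x hx.le
      have hmne : m ≠ 0 := ne_of_lt hm
      have : m⁻¹ * (-m / (c + m * x) ^ 2) = -((c + m * x) ^ 2)⁻¹ := by
        field_simp
      rw [this]
      linarith
  refine ⟨f 0 - m⁻¹ * c⁻¹, fun x hx => ?_⟩
  have hle := hhmono (show x ∈ Iic 0 from mem_Iic.mpr hx) (show (0:ℝ) ∈ Iic 0 from mem_Iic.mpr le_rfl) hx
  rw [hhdef] at hle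
  simp only [mul_zero, add_zero] at hle
  have hlast : m⁻¹ * (c + m * x)⁻¹ ≤ 0 := by
    apply mul_nonpos_of_nonpos_of_nonneg
    · exact (inv_nonpos.mpr hm.le)
    · exact (inv_nonneg.mpr (hcm x hx).le)
  linarith

/-- Corollary 2.2: if `f` satisfies (H1)-(H3) and `f''(0) < 0`, then `f` is
bounded on ℝ. -/
theorem bounded_of_negative_second_derivative
    (f : ℝ → ℝ) (hf : HypH f) (h2 : iteratedDeriv 2 f 0 < 0) :
    ∃ K : ℝ, ∀ x : ℝ, |f x| ≤ K := by
  obtain ⟨hC3, hH1, hd0, ⟨C, hC⟩, huniq, hextr, hSch⟩ := hf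
  have hcont : Continuous f := hC3.continuous
  have hdf : Differentiable ℝ f := hC3.differentiable (by norm_num)
  have hf1 : ContDiff ℝ 2 (deriv f) := by
    rw [show (3 : WithTop ℕ∞) = 2 + 1 from rfl, contDiff_succ_iff_deriv] at hC3
    exact hC3.2.2
  have hcd : Continuous (deriv f) := hf1.continuous
  -- f 0 ≤ 0
  have hf0 : f 0 ≤ 0 := by
    by_contra hpos0
    push_neg at hpos0
    have h1 : ∀ᶠ x in nhdsWithin (0:ℝ) (Ioi 0), 0 < f x ∧ 0 < x :=
      (((hcont.continuousAt).eventually (eventually_gt_nhds hpos0)).filter_mono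
        nhdsWithin_le_nhds).and (eventually_mem_nhdsWithin)
    obtain ⟨x, hfx, hx⟩ := h1.exists
    exact absurd (hH1 x (ne_of_gt hx)) (not_lt.mpr (mul_pos hx hfx).le)
  -- upper bound on Iic 0
  have hub : ∃ B : ℝ, ∀ x ≤ (0:ℝ), f x ≤ B := by
    by_cases hA : ∀ x ≤ (0:ℝ), deriv f x < 0
    · exact boundA f hC3 hA hSch h2
    · push_neg at hA
      obtain ⟨x0, hx0le, hx0⟩ := hA
      -- critical point a
      obtain ⟨a, haI, ha⟩ := intermediate_value_Icc' hx0le hcd.continuousOn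
        (show (0:ℝ) ∈ Icc (deriv f 0) (deriv f x0) from ⟨hd0.le, hx0⟩)
      have ha0 : a < 0 := by
        rcases lt_or_eq_of_le haI.2 with h | h
        · exact h
        · exact absurd (h ▸ ha) (ne_of_lt hd0)
      -- deriv f < 0 on (a, 0]
      have hneg_right : ∀ t, a < t → t ≤ 0 → deriv f t < 0 := by
        intro t hat ht0
        rcases lt_trichotomy (deriv f t) 0 with h | h | h
        · exact h
        · exact absurd (huniq t a h ha) (ne_of_gt hat)
        · obtain ⟨z, hzI, hz⟩ := intermediate_value_Icc' ht0 hcd.continuousOn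
            (show (0:ℝ) ∈ Icc (deriv f 0) (deriv f t) from ⟨hd0.le, h.le⟩)
          exact absurd (huniq z a hz ha) (ne_of_gt (lt_of_lt_of_le hat hzI.1))
      by_cases hcase : ∀ y, y < a → 0 < deriv f y
      · -- f monotone on Iic a, bounded on [a,0]
        have hmono : MonotoneOn f (Iic a) := by
          apply monotoneOn_of_deriv_nonneg (convex_Iic a) hcont.continuousOn
            hdf.differentiableOn
          intro x hx
          rw [interior_Iic] at hx
          exact (hcase x hx).le
        obtain ⟨z, hzI, hz⟩ := isCompact_Icc.exists_isMaxOn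
          (nonempty_Icc.mpr ha0.le) hcont.continuousOn
        refine ⟨max (f a) (f z), fun x hx => ?_⟩
        rcases le_or_gt x a with h | h
        · exact le_trans (hmono (mem_Iic.mpr h) (mem_Iic.mpr le_rfl) h) (le_max_left _ _)
        · exact le_trans (hz ⟨h.le, hx⟩) (le_max_right _ _)
      · -- deriv f < 0 on both sides of a : contradiction with local extremum
        exfalso
        push_neg at hcase
        obtain ⟨y, hya, hy'⟩ := hcase
        have hy : deriv f y < 0 := by
          rcases lt_or_eq_of_le hy' with h | h
          · exact h
          · exact absurd (huniq y a h ha) (ne_of_lt hya)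
        have hneg_left : ∀ t, y ≤ t → t < a → deriv f t < 0 := by
          intro t hyt hta
          rcases lt_trichotomy (deriv f t) 0 with h | h | h
          · exact h
          · exact absurd (huniq t a h ha) (ne_of_lt hta)
          · obtain ⟨z, hzI, hz⟩ := intermediate_value_Icc hyt hcd.continuousOn
              (show (0:ℝ) ∈ Icc (deriv f y) (deriv f t) from ⟨hy.le, h.le⟩)
            exact absurd (huniq z a hz ha) (ne_of_lt (lt_of_le_of_lt hzI.2 hta))
        have hanti1 : StrictAntiOn f (Icc y a) := by
          apply strictAntiOn_of_deriv_neg (convex_Icc y a) hcont.continuousOn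
          intro x hx
          rw [interior_Icc] at hx
          exact hneg_left x hx.1.le hx.2
        have hanti2 : StrictAntiOn f (Icc a 0) := by
          apply strictAntiOn_of_deriv_neg (convex_Icc a 0) hcont.continuousOn
          intro x hx
          rw [interior_Icc] at hx
          exact hneg_right x hx.1 hx.2.le
        rcases hextr a ha with hmin | hmax
        · -- local min: contradiction on the right
          have h1 : ∀ᶠ b in nhdsWithin a (Ioi a), f a ≤ f b ∧ b < 0 ∧ a < b :=
            ((hmin.filter_mono nhdsWithin_le_nhds).and
              (((eventually_lt_nhds ha0).filter_mono nhdsWithin_le_nhds).and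
                eventually_mem_nhdsWithin))
          obtain ⟨b, hfb, hb0, hab⟩ := h1.exists
          have := hanti2 (left_mem_Icc.mpr ha0.le) ⟨hab.le, hb0.le⟩ hab
          linarith
        · -- local max: contradiction on the left
          have h1 : ∀ᶠ b in nhdsWithin a (Iio a), f b ≤ f a ∧ y < b ∧ b < a :=
            ((hmax.filter_mono nhdsWithin_le_nhds).and
              (((eventually_gt_nhds hya).filter_mono nhdsWithin_le_nhds).and
                eventually_mem_nhdsWithin))
          obtain ⟨b, hfb, hyb, hba⟩ := h1.exists
          have := hanti1 ⟨hyb.le, hba.le⟩ (right_mem_Icc.mpr (hyb.le.trans hba.le)) hba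
          linarith
  obtain ⟨B, hB⟩ := hub
  refine ⟨max (max B 0) (-C), fun x => ?_⟩
  rw [abs_le]
  constructor
  · have : -C ≤ max (max B 0) (-C) := le_max_right _ _
    linarith [hC x]
  · rcases le_or_gt x 0 with h | h
    · exact le_trans (hB x h) (le_trans (le_max_left _ _) (le_max_left _ _))
    · have hfx : f x < 0 := by
        have := hH1 x (ne_of_gt h)
        nlinarith
      exact le_trans hfx.le (le_trans (le_max_right B 0) (le_max_left _ _))
end

section
/- Let f ∈ C³(ℝ,ℝ) satisfy hypotheses (H1)–(H3) with f''(0) > 0 and f'(0) < −1. With a = f'(0), b = f''(0)/2, x₂ = (a + a²)/b, ν = 2A'(0)/A''(0), and r, A, R as in the context, one has (A(x) − R(x))·x > 0 for every x ∈ (ν, x₂) with x ≠ 0. -/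
open Real Set

/-- The rational comparison function `r(x; a, b) = a²x/(a - bx)`. -/
noncomputable def rfun (a b : ℝ) (x : ℝ) : ℝ := a ^ 2 * x / (a - b * x)

/-- `A(x) = x + r(x) + (1/r(x)) ∫_x^0 r(t) dt`, with `A(0) = 0`. -/
noncomputable def Afun (a b : ℝ) (x : ℝ) : ℝ :=
  if x = 0 then 0 else x + rfun a b x + (1 / rfun a b x) * ∫ t in x..0, rfun a b t

/-- `B(x) = (1/r(x)) ∫_{-r(x)}^0 r(s) ds`, with `B(0) = 0`. -/
noncomputable def Bfun (a b : ℝ) (x : ℝ) : ℝ :=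
  if x = 0 then 0 else (1 / rfun a b x) * ∫ s in (-(rfun a b x))..0, rfun a b s

/-- `D(x) = A(x)` if `r(x) < -x`, and `D(x) = B(x)` otherwise. -/
noncomputable def Dfun (a b : ℝ) (x : ℝ) : ℝ :=
  if rfun a b x < -x then Afun a b x else Bfun a b x

private lemma aux_hasDerivAt (u : ℝ) (hu : 0 < u) :
    HasDerivAt (fun y : ℝ => Real.log y - (5*y^2 - 4*y - 1)/(2*y^2 + 4*y))
      ((u-1)^3/(u^2*(u+2)^2)) u := by
  have hu0 : u ≠ 0 := ne_of_gt hu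
  have hden : (2*u^2 + 4*u) ≠ 0 := by nlinarith
  have hnum : HasDerivAt (fun y : ℝ => 5*y^2 - 4*y - 1) (10*u - 4) u := by
    have h := (((hasDerivAt_pow 2 u).const_mul (5:ℝ)).sub
      ((hasDerivAt_id u).const_mul (4:ℝ))).sub_const (1:ℝ)
    refine h.congr_deriv ?_; push_cast; ring
  have hden' : HasDerivAt (fun y : ℝ => 2*y^2 + 4*y) (4*u + 4) u := by
    have h := ((hasDerivAt_pow 2 u).const_mul (2:ℝ)).add
      ((hasDerivAt_id u).const_mul (4:ℝ))
    refine h.congr_deriv ?_; push_cast; ring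
  have h := (Real.hasDerivAt_log hu0).sub (hnum.div hden' hden)
  refine h.congr_deriv ?_
  field_simp
  ring

private lemma log_lower_bound {u : ℝ} (hu : 0 < u) (hu1 : u ≠ 1) :
    5*u^2 - 4*u - 1 < 2*u*(u+2) * Real.log u := by
  set h : ℝ → ℝ := fun y => Real.log y - (5*y^2 - 4*y - 1)/(2*y^2 + 4*y) with hh
  have h1 : h 1 = 0 := by simp [hh]; norm_num
  have hpos : 0 < h u := by
    rcases lt_or_gt_of_ne hu1 with hlt | hgt
    · have hanti : StrictAntiOn h (Ioc 0 1) := by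
        apply strictAntiOn_of_deriv_neg (convex_Ioc 0 1)
        · intro y hy
          exact ((aux_hasDerivAt y hy.1).continuousAt).continuousWithinAt
        · intro y hy
          rw [interior_Ioc] at hy
          rw [(aux_hasDerivAt y hy.1).deriv]
          apply div_neg_of_neg_of_pos
          · exact Odd.pow_neg ⟨1, by norm_num⟩ (by linarith [hy.2])
          · have : 0 < y := hy.1
            positivity
      have := hanti ⟨hu, le_of_lt hlt⟩ ⟨one_pos, le_refl 1⟩ hlt
      linarith [h1 ▸ this]
    · have hmono : StrictMonoOn h (Ici 1) := by
        apply strictMonoOn_of_deriv_pos (convex_Ici 1)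
        · intro y hy
          have : (0:ℝ) < y := lt_of_lt_of_le one_pos hy
          exact ((aux_hasDerivAt y this).continuousAt).continuousWithinAt
        · intro y hy
          rw [interior_Ici] at hy
          have hy0 : (0:ℝ) < y := lt_trans one_pos hy
          rw [(aux_hasDerivAt y hy0).deriv]
          have hy1 : 1 < y := hy
          apply div_pos
          · exact pow_pos (by linarith) 3
          · positivity
      have := hmono (mem_Ici.mpr le_rfl) (mem_Ici.mpr (le_of_lt hgt)) hgt
      linarith [h1 ▸ this]
  have hD : 0 < 2*u^2 + 4*u := by nlinarith
  have := (div_lt_iff₀ hD).mp (by simpa [hh, sub_pos] using hpos)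
  nlinarith [this]

private lemma integral_rfun {a b x : ℝ} (ha : a < 0) (hb : 0 < b) (hax : a - b*x < 0) :
    ∫ t in x..0, rfun a b t = (a^2/b)*x + (a^3/b^2)*Real.log ((a-b*x)/a) := by
  have hb0 : b ≠ 0 := ne_of_gt hb
  have ha0 : a ≠ 0 := ne_of_lt ha
  have hne : ∀ t ∈ uIcc x 0, a - b*t < 0 := by
    intro t ht
    rw [Set.mem_uIcc] at ht
    rcases ht with ⟨h1, h2⟩ | ⟨h1, h2⟩
    · nlinarith
    · nlinarith
  have hderiv : ∀ t ∈ uIcc x 0,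
      HasDerivAt (fun t => -((a^2/b)*t + (a^3/b^2)*Real.log (a - b*t))) (rfun a b t) t := by
    intro t ht
    have hdt : a - b*t ≠ 0 := ne_of_lt (hne t ht)
    have hinner : HasDerivAt (fun t : ℝ => a - b*t) (-(b*1)) t :=
      ((hasDerivAt_id t).const_mul b).const_sub a
    have hlog := (hinner.log hdt).const_mul (a^3/b^2)
    have h := (((hasDerivAt_id t).const_mul (a^2/b)).add hlog).neg
    refine h.congr_deriv ?_
    rw [rfun]
    field_simp
    ring
  have hint : IntervalIntegrable (rfun a b) MeasureTheory.volume x 0 := by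
    apply ContinuousOn.intervalIntegrable
    apply ContinuousOn.div
    · exact (continuous_const.mul continuous_id).continuousOn
    · exact (continuous_const.sub (continuous_const.mul continuous_id)).continuousOn
    · exact fun t ht => ne_of_lt (hne t ht)
  rw [intervalIntegral.integral_eq_sub_of_hasDerivAt hderiv hint]
  have h0 : a - b*0 = a := by ring
  rw [Real.log_div (ne_of_lt hax) ha0]
  rw [h0]
  ring

set_option maxHeartbeats 1000000 in
/-- Lemma 2.4 (Lemma 3.2 in the numbering of the paper): `(A(x) - R(x))·x > 0`
for `x ∈ (ν, x₂) \ {0}`, where `R(x) = r(x; A'(0), A''(0)/2)`,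
`A'(0) = f'(0) + 1/2` and `A''(0) = f''(0)(1 + 1/(6 f'(0)))`. -/
theorem Afun_vs_Rfun
    (f : ℝ → ℝ) (hf : HypH f) (h2 : 0 < iteratedDeriv 2 f 0) (h1 : deriv f 0 < -1)
    (a b a₁ b₁ ν x₂ : ℝ)
    (haeq : a = deriv f 0) (hbeq : b = iteratedDeriv 2 f 0 / 2)
    (ha₁ : a₁ = a + 1 / 2) (hb₁ : b₁ = b * (1 + 1 / (6 * a)))
    (hν : ν = a₁ / b₁) (hx₂ : x₂ = (a + a ^ 2) / b) :
    ∀ x ∈ Set.Ioo ν x₂, x ≠ 0 → (Afun a b x - rfun a₁ b₁ x) * x > 0 := by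
  intro x hx hxne
  have ha : a < -1 := by rw [haeq]; exact h1
  have ha0 : a ≠ 0 := by linarith
  have haneg : a < 0 := by linarith
  have hb : 0 < b := by rw [hbeq]; linarith
  have hb0 : b ≠ 0 := ne_of_gt hb
  have kb₁ : a * b₁ = a*b + b/6 := by rw [hb₁]; field_simp
  have hb₁pos : 0 < b₁ := by
    by_contra hcon
    push_neg at hcon
    have h5 : 0 ≤ a * b₁ := by nlinarith [mul_nonneg (show (0:ℝ) ≤ -a by linarith) (show (0:ℝ) ≤ -b₁ by linarith)]
    nlinarith [mul_pos hb (show (0:ℝ) < -(a + 1/6) by linarith)]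
  have ha₁neg : a₁ < 0 := by rw [ha₁]; linarith
  have hd₁ : a₁ - b₁*x < 0 := by
    have hxl := hx.1
    rw [hν] at hxl
    have := (div_lt_iff₀ hb₁pos).mp hxl
    linarith
  have had : a - b*x < 0 := by
    have h3 : a*b₁ < a₁*b := by
      have : a₁*b = a*b + b/2 := by rw [ha₁]; ring
      linarith
    have h4 : a₁*b < (b₁*x)*b := by
      apply mul_lt_mul_of_pos_right _ hb
      linarith
    have h5 : a*b₁ < (b*x)*b₁ := by nlinarith
    have := lt_of_mul_lt_mul_right h5 (le_of_lt hb₁pos)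
    linarith
  have h3a : 3*a - b*x < 0 := by linarith
  have hu : 0 < (a - b*x)/a := div_pos_of_neg_of_neg had haneg
  have hu1 : (a - b*x)/a ≠ 1 := by
    intro h
    rw [div_eq_one_iff_eq ha0] at h
    have hbx : b * x = 0 := by linarith
    exact hxne ((mul_eq_zero.mp hbx).resolve_left hb0)
  have hlog := log_lower_bound hu hu1
  have hrne : rfun a b x ≠ 0 := by
    rw [rfun]
    apply div_ne_zero _ (ne_of_lt had)
    exact mul_ne_zero (pow_ne_zero 2 ha0) hxne
  have hA : Afun a b x = x + rfun a b x
      + (1 / rfun a b x) * ((a^2/b)*x + (a^3/b^2)*Real.log ((a-b*x)/a)) := by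
    rw [Afun, if_neg hxne, integral_rfun haneg hb had]
  rw [hA]
  have hx4 : (0:ℝ) < x^4 := lt_of_le_of_ne (by positivity) (Ne.symm (pow_ne_zero 4 hxne))
  have hdd₁ : 0 < (a - b*x)*(a₁ - b₁*x) := mul_pos_of_neg_of_neg had hd₁
  have ha3 : a^3 < 0 := by nlinarith [pow_pos (neg_pos.mpr haneg) 3]
  have hW : 0 < 2*((a-b*x)/a)*((a-b*x)/a + 2)*Real.log ((a-b*x)/a)
      - (5*((a-b*x)/a)^2 - 4*((a-b*x)/a) - 1) := by linarith
  have hW₂ : 0 < 2*(a-b*x)*(3*a-b*x)*Real.log ((a-b*x)/a)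
      - (5*(a-b*x)^2 - 4*a*(a-b*x) - a^2) := by
    have hid : 2*(a-b*x)*(3*a-b*x)*Real.log ((a-b*x)/a)
        - (5*(a-b*x)^2 - 4*a*(a-b*x) - a^2)
        = a^2 * (2*((a-b*x)/a)*((a-b*x)/a + 2)*Real.log ((a-b*x)/a)
            - (5*((a-b*x)/a)^2 - 4*((a-b*x)/a) - 1)) := by
      field_simp
      ring
    rw [hid]
    positivity
  have hM : (b^2*((a - b*x)*(a₁ - b₁*x))) * (6*a^2*(3*a - b*x)) < 0 := by
    apply mul_neg_of_pos_of_neg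
    · positivity
    · have : 0 < 6*a^2 := by positivity
      exact mul_neg_of_pos_of_neg this h3a
  have hNUM : 4*a^3*b^4*x^4 + 3*a^3*((a - b*x)*(a₁ - b₁*x))
      * (2*(a-b*x)*(3*a-b*x)*Real.log ((a-b*x)/a)
         - (5*(a-b*x)^2 - 4*a*(a-b*x) - a^2)) < 0 := by
    have t1 : 4*a^3*b^4*x^4 < 0 := by nlinarith [mul_pos (pow_pos hb 4) hx4]
    have t2 : 3*a^3*((a - b*x)*(a₁ - b₁*x))
        * (2*(a-b*x)*(3*a-b*x)*Real.log ((a-b*x)/a)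
           - (5*(a-b*x)^2 - 4*a*(a-b*x) - a^2)) < 0 := by
      apply mul_neg_of_neg_of_pos _ hW₂
      nlinarith [mul_pos hdd₁ (show (0:ℝ) < -(3*a^3) by nlinarith)]
    linarith
  have hadne : a - b*x ≠ 0 := ne_of_lt had
  have hd₁ne : a₁ - b₁*x ≠ 0 := ne_of_lt hd₁
  have hb₁' : b₁ = (6*a*b + b)/(6*a) := by rw [hb₁]; field_simp
  have hE : (x + rfun a b x
      + (1 / rfun a b x) * ((a^2/b)*x + (a^3/b^2)*Real.log ((a-b*x)/a))
      - rfun a₁ b₁ x) * x * (b^2*((a - b*x)*(a₁ - b₁*x)))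
      = b^2*((a-b*x)*(a₁-b₁*x))*x^2 + a^2*b^2*(a₁-b₁*x)*x^2
        + b*(a-b*x)^2*(a₁-b₁*x)*x
        + a*(a-b*x)^2*(a₁-b₁*x)*Real.log ((a-b*x)/a)
        - a₁^2*b^2*(a-b*x)*x^2 := by
    rw [rfun, rfun]
    generalize Real.log ((a - b*x)/a) = L
    field_simp [show a - x*b ≠ 0 by rwa [mul_comm], show a₁ - x*b₁ ≠ 0 by rwa [mul_comm]]
    ring
  have hE2 : (b^2*((a-b*x)*(a₁-b₁*x))*x^2 + a^2*b^2*(a₁-b₁*x)*x^2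
        + b*(a-b*x)^2*(a₁-b₁*x)*x
        + a*(a-b*x)^2*(a₁-b₁*x)*Real.log ((a-b*x)/a)
        - a₁^2*b^2*(a-b*x)*x^2) * (6*a^2*(3*a - b*x))
      = 4*a^3*b^4*x^4 + 3*a^3*((a - b*x)*(a₁ - b₁*x))
      * (2*(a-b*x)*(3*a-b*x)*Real.log ((a-b*x)/a)
         - (5*(a-b*x)^2 - 4*a*(a-b*x) - a^2)) := by
    rw [ha₁, hb₁']
    generalize Real.log ((a - b*x)/a) = L
    field_simp
    ring
  have hkey : (x + rfun a b x
      + (1 / rfun a b x) * ((a^2/b)*x + (a^3/b^2)*Real.log ((a-b*x)/a))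
      - rfun a₁ b₁ x) * x
      * ((b^2*((a - b*x)*(a₁ - b₁*x))) * (6*a^2*(3*a - b*x)))
      = 4*a^3*b^4*x^4 + 3*a^3*((a - b*x)*(a₁ - b₁*x))
      * (2*(a-b*x)*(3*a-b*x)*Real.log ((a-b*x)/a)
         - (5*(a-b*x)^2 - 4*a*(a-b*x) - a^2)) := by
    rw [← hE2, ← hE]
    ring
  have hMne : (b^2*((a - b*x)*(a₁ - b₁*x))) * (6*a^2*(3*a - b*x)) ≠ 0 := ne_of_lt hM
  have := (eq_div_iff hMne).mpr hkey
  rw [this]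
  exact div_pos_of_neg_of_neg hNUM hM
end

section
/- For every pair (s, ζ) with s ∈ [−1, 0] and ζ ∈ [−1.5, −1.25], one has L(ζ,s) = s − ζ − ln(1 + s − ζ) + 2(ζ + 1/2)²(s − ζ)² / ((2ζ + 1)ζ² + (2/3)ζ(s − ζ)) < 0. -/
set_option maxHeartbeats 1000000


open Real Set

lemma pade_log_lower (y : ℝ) (hy : 0 ≤ y) : 2 * y / (2 + y) ≤ Real.log (1 + y) := by
  set g : ℝ → ℝ := fun u => Real.log (1 + u) - 2 * u / (2 + u) with hg
  have key : ∀ t : ℝ, 0 ≤ t → HasDerivAt g (1 / (1 + t) - 4 / (2 + t) ^ 2) t := by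
    intro t ht
    have h1t : (0:ℝ) < 1 + t := by linarith
    have h2t : (2:ℝ) + t ≠ 0 := by positivity
    have h1 : HasDerivAt (fun u : ℝ => Real.log (1 + u)) (1 / (1 + t)) t := by
      have := ((hasDerivAt_id t).const_add (1:ℝ)).log h1t.ne'
      simpa using this
    have h2 : HasDerivAt (fun u : ℝ => 2 * u / (2 + u)) (4 / (2 + t) ^ 2) t := by
      have := ((hasDerivAt_id t).const_mul (2:ℝ)).div ((hasDerivAt_id t).const_add (2:ℝ)) h2t
      have e : (fun u : ℝ => 2 * u / (2 + u)) = ((fun y => 2 * id y) / fun x => 2 + id x) := by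
        ext u; simp
      rw [e]
      refine this.congr_deriv ?_
      simp only [id]
      ring
    exact h1.sub h2
  have mono : MonotoneOn g (Set.Ici 0) := by
    apply monotoneOn_of_deriv_nonneg (convex_Ici 0)
    · intro t ht
      exact (key t ht).continuousAt.continuousWithinAt
    · intro t ht
      rw [interior_Ici, Set.mem_Ioi] at ht
      exact (key t ht.le).differentiableAt.differentiableWithinAt
    · intro t ht
      rw [interior_Ici, Set.mem_Ioi] at ht
      rw [(key t ht.le).deriv]
      have h1t : (0:ℝ) < 1 + t := by linarith
      have h2t : (0:ℝ) < 2 + t := by linarith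
      have : 1 / (1 + t) - 4 / (2 + t) ^ 2 = t ^ 2 / ((1 + t) * (2 + t) ^ 2) := by
        field_simp
        ring
      rw [this]
      positivity
  have h0 : g 0 = 0 := by simp [hg]
  have hm := mono (Set.mem_Ici.mpr le_rfl) (Set.mem_Ici.mpr hy) hy
  rw [h0] at hm
  simp only [hg] at hm
  linarith

lemma log_five_fourths : (223/1000 : ℝ) ≤ Real.log (5 / 4) := by
  have h := Real.abs_log_sub_add_sum_range_le (x := (-1/4 : ℝ)) (by rw [abs_of_neg] <;> norm_num) 6
  have h14 : |(-1/4 : ℝ)| = 1/4 := by rw [abs_of_neg] <;> norm_num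
  rw [h14, show (1 : ℝ) - (-1/4) = 5/4 by norm_num] at h
  have hs : (∑ i ∈ Finset.range 6, (-1/4 : ℝ) ^ (i + 1) / (i + 1)) =
      -(1/4) + 1/32 - 1/192 + 1/1024 - 1/5120 + 1/24576 := by
    simp [Finset.sum_range_succ]
    norm_num
  rw [hs, abs_le] at h
  have h1 := h.1
  norm_num at h1 ⊢
  linarith

/-- Lemma 2.5: `L(ζ, s) < 0` on the rectangle `[-1, 0] × [-1.5, -1.25]`. -/
theorem Lfun_negative_on_rectangle
    (s ζ : ℝ) (hs : s ∈ Set.Icc (-1 : ℝ) 0) (hζ : ζ ∈ Set.Icc (-1.5 : ℝ) (-1.25)) :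
    s - ζ - Real.log (1 + s - ζ) +
      2 * (ζ + 1 / 2) ^ 2 * (s - ζ) ^ 2 /
        ((2 * ζ + 1) * ζ ^ 2 + (2 / 3) * ζ * (s - ζ)) < 0 := by
  obtain ⟨hs1, hs2⟩ := hs
  obtain ⟨hζ1, hζ2⟩ := hζ
  norm_num at hζ1 hζ2
  set x : ℝ := s - ζ with hxdef
  have hx1 : 1/4 ≤ x := by simp only [hxdef]; linarith
  have hx2 : x ≤ 3/2 := by simp only [hxdef]; linarith
  have hxz1 : -1 - ζ ≤ x := by simp only [hxdef]; linarith
  have hxz2 : x ≤ -ζ := by simp only [hxdef]; linarith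
  set y : ℝ := (4 * x - 1) / 5 with hydef
  have hy0 : 0 ≤ y := by rw [hydef]; linarith
  have hy2 : (0:ℝ) < 2 + y := by linarith
  have hden : (0:ℝ) < 4 * x + 9 := by linarith
  -- log lower bound
  have hlog : (223/1000 : ℝ) + 2 * y / (2 + y) ≤ Real.log (1 + x) := by
    have hx5 : (1:ℝ) + x = 5/4 * (1 + y) := by
      rw [hydef]; ring
    rw [hx5, Real.log_mul (by norm_num) (by positivity)]
    exact add_le_add log_five_fourths (pade_log_lower y hy0)
  -- denominator negative
  have hD : 0 < -((2 * ζ + 1) * ζ ^ 2 + (2 / 3) * ζ * x) := by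
    have hz2 : (25/16:ℝ) ≤ ζ ^ 2 := by nlinarith
    have hu : (3/2:ℝ) ≤ -(2 * ζ + 1) := by linarith
    have h1 : (75/32:ℝ) ≤ -(2 * ζ + 1) * ζ ^ 2 := by nlinarith
    have h2 : 0 ≤ -(2/3) * ζ * x :=
      mul_nonneg (by linarith : (0:ℝ) ≤ -(2/3) * ζ) (by linarith : (0:ℝ) ≤ x)
    nlinarith
  -- the key polynomial inequality (explicit positivity certificate)
  have ha : (0:ℝ) ≤ x - 1/4 := by linarith
  have hq : (0:ℝ) ≤ -5/4 - ζ := by linarith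
  have hv : (0:ℝ) ≤ x + 1 + ζ := by linarith
  have hpoly : ((x - 223/1000) * (4 * x + 9) - (8 * x - 2)) *
      (-((2 * ζ + 1) * ζ ^ 2 + (2 / 3) * ζ * x)) <
      2 * (ζ + 1 / 2) ^ 2 * x ^ 2 * (4 * x + 9) := by
    have t1 : (0:ℝ) ≤ (x - 1/4) * (-5/4 - ζ) := mul_nonneg ha hq
    have t2 : (0:ℝ) ≤ (x - 1/4) ^ 2 * (-5/4 - ζ) := mul_nonneg (by positivity) hq
    have t3 : (0:ℝ) ≤ (x - 1/4) ^ 3 := by positivity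
    have t4 : (0:ℝ) ≤ (x - 1/4) ^ 3 * (-5/4 - ζ) := mul_nonneg t3 hq
    have t5 : (0:ℝ) ≤ (x + 1 + ζ) * (-5/4 - ζ) ^ 2 := mul_nonneg hv (by positivity)
    have t6 : (0:ℝ) ≤ (x + 1 + ζ) * (x - 1/4) * (-5/4 - ζ) ^ 2 :=
      mul_nonneg (mul_nonneg hv ha) (by positivity)
    have t7 : (0:ℝ) ≤ (x + 1 + ζ) * (x - 1/4) ^ 2 * (-5/4 - ζ) ^ 2 :=
      mul_nonneg (mul_nonneg hv (by positivity)) (by positivity)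
    have t8 : (0:ℝ) ≤ (x + 1 + ζ) * (-5/4 - ζ) := mul_nonneg hv hq
    have t9 : (0:ℝ) ≤ (x + 1 + ζ) * (x - 1/4) * (-5/4 - ζ) :=
      mul_nonneg (mul_nonneg hv ha) hq
    have t10 : (0:ℝ) ≤ (x + 1 + ζ) * (x - 1/4) ^ 2 * (-5/4 - ζ) :=
      mul_nonneg (mul_nonneg hv (by positivity)) hq
    have t11 : (0:ℝ) ≤ (x - 1/4) ^ 2 := by positivity
    linarith [t1, t2, t3, t4, t5, t6, t7, t8, t9, t10, t11, ha, hq, hv]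
  have hne1 : (2:ℝ) + y ≠ 0 := hy2.ne'
  have hne2 : (4 * x + 9 : ℝ) ≠ 0 := hden.ne'
  -- convert to fraction form
  have key : x - (223/1000 + 2 * y / (2 + y)) <
      2 * (ζ + 1 / 2) ^ 2 * x ^ 2 / (-((2 * ζ + 1) * ζ ^ 2 + (2 / 3) * ζ * x)) := by
    rw [lt_div_iff₀ hD]
    have h2y : 2 * y / (2 + y) = (8 * x - 2) / (4 * x + 9) := by
      rw [div_eq_div_iff hne1 hne2, hydef]
      ring
    rw [h2y]
    have expand : (x - (223/1000 + (8 * x - 2) / (4 * x + 9))) *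
        (-((2 * ζ + 1) * ζ ^ 2 + (2 / 3) * ζ * x)) =
        (((x - 223/1000) * (4 * x + 9) - (8 * x - 2)) *
          (-((2 * ζ + 1) * ζ ^ 2 + (2 / 3) * ζ * x))) / (4 * x + 9) := by
      field_simp
      ring
    rw [expand, div_lt_iff₀ hden]
    exact hpoly
  have hfrac : 2 * (ζ + 1 / 2) ^ 2 * x ^ 2 / ((2 * ζ + 1) * ζ ^ 2 + (2 / 3) * ζ * x) =
      -(2 * (ζ + 1 / 2) ^ 2 * x ^ 2 / (-((2 * ζ + 1) * ζ ^ 2 + (2 / 3) * ζ * x))) := by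
    rw [div_neg, neg_neg]
  rw [show (1:ℝ) + s - ζ = 1 + x by rw [hxdef]; ring, hfrac]
  linarith [hlog, key]
end

section
/- Let f ∈ C³(ℝ,ℝ) satisfy hypotheses (H1)–(H3) with f''(0) > 0 and f'(0) ∈ [−1.5, −1.25]. With a = f'(0), b = f''(0)/2, x₂ = (a + a²)/b, and r, B, R as in the context, one has B(x) > R(x) for all x ≥ x₂. -/
open Real Set

section Aux

/-- Core polynomial inequality. -/
private theorem corePoly (a u : ℝ) (ha2 : a ≤ -5/4) (hu1 : -1-a ≤ u) :
    a^2*(3*u^2+10*u+12)*(6*a^2+3*a+2*u) < 18*(-a)*(a+1/2)^2*(2+u)^3 := by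
  have hp0 : (0:ℝ) ≤ -5/4 - a := by linarith
  have hv0 : (0:ℝ) ≤ u + 1 + a := by linarith
  have h0 : (0:ℝ) ≤ (-5/4 - a)^0 * (u+1+a)^1 := mul_nonneg (pow_nonneg hp0 0) (pow_nonneg hv0 1)
  have h1 : (0:ℝ) ≤ (-5/4 - a)^0 * (u+1+a)^2 := mul_nonneg (pow_nonneg hp0 0) (pow_nonneg hv0 2)
  have h2 : (0:ℝ) ≤ (-5/4 - a)^0 * (u+1+a)^3 := mul_nonneg (pow_nonneg hp0 0) (pow_nonneg hv0 3)
  have h3 : (0:ℝ) ≤ (-5/4 - a)^1 * (u+1+a)^0 := mul_nonneg (pow_nonneg hp0 1) (pow_nonneg hv0 0)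
  have h4 : (0:ℝ) ≤ (-5/4 - a)^1 * (u+1+a)^1 := mul_nonneg (pow_nonneg hp0 1) (pow_nonneg hv0 1)
  have h5 : (0:ℝ) ≤ (-5/4 - a)^1 * (u+1+a)^2 := mul_nonneg (pow_nonneg hp0 1) (pow_nonneg hv0 2)
  have h6 : (0:ℝ) ≤ (-5/4 - a)^1 * (u+1+a)^3 := mul_nonneg (pow_nonneg hp0 1) (pow_nonneg hv0 3)
  have h7 : (0:ℝ) ≤ (-5/4 - a)^2 * (u+1+a)^0 := mul_nonneg (pow_nonneg hp0 2) (pow_nonneg hv0 0)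
  have h8 : (0:ℝ) ≤ (-5/4 - a)^2 * (u+1+a)^1 := mul_nonneg (pow_nonneg hp0 2) (pow_nonneg hv0 1)
  have h9 : (0:ℝ) ≤ (-5/4 - a)^2 * (u+1+a)^2 := mul_nonneg (pow_nonneg hp0 2) (pow_nonneg hv0 2)
  have h10 : (0:ℝ) ≤ (-5/4 - a)^2 * (u+1+a)^3 := mul_nonneg (pow_nonneg hp0 2) (pow_nonneg hv0 3)
  have h11 : (0:ℝ) ≤ (-5/4 - a)^3 * (u+1+a)^0 := mul_nonneg (pow_nonneg hp0 3) (pow_nonneg hv0 0)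
  have h12 : (0:ℝ) ≤ (-5/4 - a)^3 * (u+1+a)^1 := mul_nonneg (pow_nonneg hp0 3) (pow_nonneg hv0 1)
  have h13 : (0:ℝ) ≤ (-5/4 - a)^3 * (u+1+a)^2 := mul_nonneg (pow_nonneg hp0 3) (pow_nonneg hv0 2)
  have h14 : (0:ℝ) ≤ (-5/4 - a)^3 * (u+1+a)^3 := mul_nonneg (pow_nonneg hp0 3) (pow_nonneg hv0 3)
  have h15 : (0:ℝ) ≤ (-5/4 - a)^4 * (u+1+a)^0 := mul_nonneg (pow_nonneg hp0 4) (pow_nonneg hv0 0)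
  have h16 : (0:ℝ) ≤ (-5/4 - a)^4 * (u+1+a)^1 := mul_nonneg (pow_nonneg hp0 4) (pow_nonneg hv0 1)
  have h17 : (0:ℝ) ≤ (-5/4 - a)^4 * (u+1+a)^2 := mul_nonneg (pow_nonneg hp0 4) (pow_nonneg hv0 2)
  have h18 : (0:ℝ) ≤ (-5/4 - a)^5 * (u+1+a)^0 := mul_nonneg (pow_nonneg hp0 5) (pow_nonneg hv0 0)
  have h19 : (0:ℝ) ≤ (-5/4 - a)^5 * (u+1+a)^1 := mul_nonneg (pow_nonneg hp0 5) (pow_nonneg hv0 1)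
  linarith [h0, h1, h2, h3, h4, h5, h6, h7, h8, h9, h10, h11, h12, h13, h14, h15, h16, h17, h18, h19]

private theorem phi_deriv : ∀ t : ℝ, 0 ≤ t → HasDerivAt
    (fun s : ℝ => Real.log (1+s) - (2*s/(2+s) + 2*s^3/(3*(2+s)^3)))
    (t^4/((1+t)*(2+t)^4)) t := by
  intro t ht
  have h1 : (1:ℝ)+t ≠ 0 := by positivity
  have h2 : (2:ℝ)+t ≠ 0 := by positivity
  have h3 : (3:ℝ)*(2+t)^3 ≠ 0 := by positivity
  have d1 : HasDerivAt (fun s : ℝ => Real.log (1+s)) (1/(1+t)) t := by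
    simpa using (((hasDerivAt_id t).const_add (1:ℝ)).log h1)
  have d2 := (((hasDerivAt_id t).const_mul (2:ℝ)).div ((hasDerivAt_id t).const_add (2:ℝ)) h2)
  have d3 := (((hasDerivAt_pow 3 t).const_mul (2:ℝ)).div ((((hasDerivAt_id t).const_add (2:ℝ)).pow 3).const_mul (3:ℝ)) h3)
  have D := d1.sub (d2.add d3)
  refine D.congr_deriv ?_
  have h1' : (0:ℝ) < 1+t := by linarith
  have h2' : (0:ℝ) < 2+t := by linarith
  simp only [id, Pi.pow_apply, Nat.cast_ofNat]
  field_simp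
  ring

private theorem log_lb {u : ℝ} (hu : 0 < u) :
    2*u/(2+u) + 2*u^3/(3*(2+u)^3) < Real.log (1+u) := by
  have mono : StrictMonoOn (fun s : ℝ => Real.log (1+s) - (2*s/(2+s) + 2*s^3/(3*(2+s)^3))) (Set.Ici 0) := by
    apply strictMonoOn_of_deriv_pos (convex_Ici 0)
    · exact fun t ht => (phi_deriv t ht).continuousAt.continuousWithinAt
    · intro t ht
      rw [interior_Ici] at ht
      rw [(phi_deriv t ht.le).deriv]
      have : (0:ℝ) < t := ht
      positivity
  have h := mono (Set.self_mem_Ici) (Set.mem_Ici.mpr hu.le) hu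
  norm_num at h
  linarith

private theorem integral_eval (a b r : ℝ) (hb : 0 < b) (ha0 : a < 0) (hrneg : r < 0) :
    ∫ s in (-r)..0, rfun a b s
      = (-(a^2/b)*0 - a^3/b^2 * Real.log (a - b*0))
        - (-(a^2/b)*(-r) - a^3/b^2 * Real.log (a - b*(-r))) := by
  have hbne : b ≠ 0 := ne_of_gt hb
  have huicc : Set.uIcc (-r) 0 = Set.Icc 0 (-r) := Set.uIcc_of_ge (by linarith)
  have hder : ∀ t ∈ Set.uIcc (-r) 0,
      HasDerivAt (fun s => -(a^2/b)*s - a^3/b^2 * Real.log (a - b*s)) (rfun a b t) t := by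
    intro t ht
    rw [huicc] at ht
    have htne : a - b*t < 0 := by nlinarith [ht.1, mul_nonneg hb.le ht.1]
    have dlin : HasDerivAt (fun s : ℝ => a - b*s) (-(b*1)) t :=
      ((hasDerivAt_id t).const_mul b).const_sub a
    have dlog := (dlin.log (ne_of_lt htne)).const_mul (a^3/b^2)
    have dall := ((hasDerivAt_id t).const_mul (-(a^2/b))).sub dlog
    refine dall.congr_deriv ?_
    rw [rfun]
    field_simp [ne_of_lt htne]
    ring
  have hcont : ContinuousOn (rfun a b) (Set.uIcc (-r) 0) := by
    rw [huicc]
    apply ContinuousOn.div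
    · fun_prop
    · fun_prop
    · intro t ht
      have : a - b*t < 0 := by nlinarith [ht.1, mul_nonneg hb.le ht.1]
      exact ne_of_lt this
  exact intervalIntegral.integral_eq_sub_of_hasDerivAt hder hcont.intervalIntegrable

end Aux

set_option maxHeartbeats 1600000 in
/-- Lemma 2.6: if `f'(0) ∈ [-1.5, -1.25]`, then `B(x) > R(x)` for all `x ≥ x₂`. -/
theorem Bfun_gt_Rfun
    (f : ℝ → ℝ) (hf : HypH f) (h2 : 0 < iteratedDeriv 2 f 0)
    (h1 : deriv f 0 ∈ Set.Icc (-1.5 : ℝ) (-1.25))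
    (a b a₁ b₁ x₂ : ℝ)
    (haeq : a = deriv f 0) (hbeq : b = iteratedDeriv 2 f 0 / 2)
    (ha₁ : a₁ = a + 1 / 2) (hb₁ : b₁ = b * (1 + 1 / (6 * a)))
    (hx₂ : x₂ = (a + a ^ 2) / b) :
    ∀ x : ℝ, x₂ ≤ x → Bfun a b x > rfun a₁ b₁ x := by
  intro x hx
  have ha_ub : a ≤ -5/4 := by rw [haeq]; have := h1.2; norm_num at this ⊢; linarith
  have ha0 : a < 0 := lt_of_le_of_lt ha_ub (by norm_num)
  have hane : a ≠ 0 := ne_of_lt ha0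
  have hb : 0 < b := by rw [hbeq]; exact div_pos h2 two_pos
  have hbne : b ≠ 0 := ne_of_gt hb
  have ha2pos : 0 < a^2 := by nlinarith
  have hx2pos : 0 < x₂ := by
    rw [hx₂]; exact div_pos (by nlinarith) hb
  have hxpos : 0 < x := lt_of_lt_of_le hx2pos hx
  have hxne : x ≠ 0 := ne_of_gt hxpos
  have hbx : a + a^2 ≤ b*x := by
    have h' : b * x₂ ≤ b * x := mul_le_mul_of_nonneg_left hx hb.le
    rw [hx₂] at h'
    have : b * ((a + a^2)/b) = a + a^2 := by field_simp
    linarith [this ▸ h']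
  have hd : a - b*x < 0 := by linarith
  have hdne : a - b*x ≠ 0 := ne_of_lt hd
  set r := rfun a b x with hr
  have hrval : r = a^2*x/(a-b*x) := rfl
  have hrneg : r < 0 := by
    rw [hrval]; exact div_neg_of_pos_of_neg (mul_pos ha2pos hxpos) hd
  have hrne : r ≠ 0 := ne_of_lt hrneg
  set u := b*r/a with hu
  have hupos : 0 < u := div_pos_of_neg_of_neg (mul_neg_of_pos_of_neg hb hrneg) ha0
  have hune : u ≠ 0 := ne_of_gt hupos
  have h1u : (0:ℝ) < 1 + u := by linarith
  have h2u : (0:ℝ) < 2 + u := by linarith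
  have hbr : b*r = a*u := by rw [hu]; field_simp
  have hru : u = a*b*x/(a-b*x) := by rw [hu, hrval]; field_simp
  have hu1 : -1-a ≤ u := by
    have e : u + 1 + a = (a + a^2 - b*x)/(a - b*x) := by
      rw [hru]; field_simp; ring
    have h' : 0 ≤ (a + a^2 - b*x)/(a - b*x) := by
      rw [show (a + a^2 - b*x)/(a - b*x) = (b*x - (a + a^2))/(b*x - a) by
        rw [← neg_div_neg_eq]; ring_nf]
      exact div_nonneg (by linarith) (by linarith)
    rw [← e] at h'
    linarith
  -- evaluate B
  have hBeq : Bfun a b x = -(a^2/b) + a^2/(b*u) * Real.log (1+u) := by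
    have hint := integral_eval a b r hb ha0 hrneg
    rw [Bfun, if_neg hxne, ← hr, hint]
    have e1 : a - b*0 = a := by ring
    have e2 : a - b*(-r) = a * (1+u) := by rw [mul_add, mul_one, ← hbr]; ring
    rw [e1, e2, Real.log_mul hane (ne_of_gt h1u)]
    have hbu : b * u = b^2*r/a := by rw [hu]; field_simp
    rw [hbu]
    field_simp
    ring
  -- lower bound for B via the log inequality
  have hlog := log_lb hupos
  have hcoef : 0 < a^2/(b*u) := div_pos ha2pos (mul_pos hb hupos)
  have hBgt : -(a^2/b) + a^2/(b*u) * (2*u/(2+u) + 2*u^3/(3*(2+u)^3)) < Bfun a b x := by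
    rw [hBeq]
    have := mul_lt_mul_of_pos_left hlog hcoef
    linarith
  have hBform : -(a^2/b) + a^2/(b*u) * (2*u/(2+u) + 2*u^3/(3*(2+u)^3))
      = -(a^2*u*(3*u^2+10*u+12))/(3*b*(2+u)^3) := by
    field_simp
    ring
  -- bound R from above
  have hrel : u*(a - b*x) = a*b*x := by rw [hru]; field_simp
  have hau : a + u < 0 := by
    by_contra h
    push_neg at h
    nlinarith [mul_nonneg (mul_pos hb hxpos).le h, mul_neg_of_pos_of_neg hupos ha0]
  have haune : a + u ≠ 0 := ne_of_lt hau
  have hxu : x = u*a/(b*(a+u)) := by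
    rw [eq_div_iff (by exact mul_ne_zero hbne haune)]
    linear_combination (-1 : ℝ) * hrel
  have hD3 : 0 < 6*a^2 + 3*a + 2*u := by nlinarith [sq_nonneg (a+5/4)]
  have hRval : rfun a₁ b₁ x = 6*(a+1/2)^2*(u*a) / (b*(6*a^2+3*a+2*u)) := by
    rw [rfun, ha₁, hb₁, hxu]
    rw [div_eq_div_iff ?h1 (by positivity)]
    case h1 =>
      have e : a + 1/2 - b*(1 + 1/(6*a)) * (u*a/(b*(a+u))) = (6*a^2+3*a+2*u)/(6*(a+u)) := by
        field_simp
        ring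
      rw [e]
      exact ne_of_lt (div_neg_of_pos_of_neg hD3 (by linarith))
    field_simp
    ring
  have hstep : rfun a₁ b₁ x < -(a^2*u*(3*u^2+10*u+12))/(3*b*(2+u)^3) := by
    rw [hRval, div_lt_div_iff₀ (mul_pos hb hD3) (by positivity)]
    have hcore := corePoly a u ha_ub hu1
    have := mul_lt_mul_of_pos_left hcore (mul_pos hb hupos)
    nlinarith [this]
  rw [← hBform] at hstep
  linarith
end

section
/- Let f ∈ C³(ℝ,ℝ) satisfy hypotheses (H1)–(H3) with f''(0) > 0. Let z : ℝ → ℝ be an entire solution of x'(t) = f(x(t−1)), and let m < 0 < M be such that m ≤ z(t) ≤ M for all t ∈ ℝ and z(1) = m (so z attains its minimum at t = 1). Then m > D(M) and m > r(−r(M)/2), where r and D are defined from f as in the context. -/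
open Real Set

section Aux


section R
variable {a b : ℝ} (ha : a < 0) (hb : 0 < b)
include ha hb

lemma rden_neg {x : ℝ} (hx : 0 ≤ x) : a - b * x < 0 := by nlinarith

lemma rfun_neg {x : ℝ} (hx : 0 < x) : rfun a b x < 0 := by
  have h1 : a - b * x < 0 := rden_neg ha hb hx.le
  have h2 : 0 < a ^ 2 * x := mul_pos (pow_two_pos_of_ne_zero ha.ne) hx
  exact div_neg_of_pos_of_neg h2 h1

lemma rfun_nonpos {x : ℝ} (hx : 0 ≤ x) : rfun a b x ≤ 0 := by
  rcases eq_or_lt_of_le hx with h | h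
  · simp [← h, rfun]
  · exact (rfun_neg ha hb h).le

omit ha hb in
lemma hasDerivAt_rfun {a b x : ℝ} (hx : a - b * x ≠ 0) :
    HasDerivAt (rfun a b) (a ^ 3 / (a - b * x) ^ 2) x := by
  have h1 : HasDerivAt (fun y : ℝ => a ^ 2 * y) (a ^ 2) x := by
    simpa using (hasDerivAt_id x).const_mul (a ^ 2)
  have h2 : HasDerivAt (fun y : ℝ => a - b * y) (-b) x := by
    simpa using ((hasDerivAt_id x).const_mul b).const_sub a
  have := h1.fun_div h2 hx
  refine this.congr_deriv (Eq.symm ?_)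
  field_simp
  ring

lemma continuousOn_rfun : ContinuousOn (rfun a b) (Ici 0) := fun x hx =>
  (hasDerivAt_rfun (ne_of_lt (rden_neg ha hb hx))).continuousAt.continuousWithinAt

lemma strictAntiOn_rfun : StrictAntiOn (rfun a b) (Ici 0) := by
  apply strictAntiOn_of_deriv_neg (convex_Ici 0) (continuousOn_rfun ha hb)
  intro x hx
  rw [interior_Ici] at hx
  rw [(hasDerivAt_rfun (ne_of_lt (rden_neg ha hb (le_of_lt hx)))).deriv]
  have h1 : (0:ℝ) < (a - b * x) ^ 2 :=
    pow_two_pos_of_ne_zero (ne_of_lt (rden_neg ha hb (le_of_lt hx)))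
  have h2 : a ^ 3 < 0 := by nlinarith [pow_two_pos_of_ne_zero (a := a) ha.ne]
  exact div_neg_of_neg_of_pos h2 h1

lemma antitoneOn_rfun : AntitoneOn (rfun a b) (Ici 0) :=
  (strictAntiOn_rfun ha hb).antitoneOn

lemma r1_mono {x y : ℝ} (hx : 0 ≤ x) (hxy : x ≤ y) :
    a ^ 3 / (a - b * x) ^ 2 ≤ a ^ 3 / (a - b * y) ^ 2 := by
  have hy : 0 ≤ y := hx.trans hxy
  have h1 : a - b * x < 0 := rden_neg ha hb hx
  have h2 : a - b * y < 0 := rden_neg ha hb hy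
  have h3 : (0:ℝ) < (a - b * y) ^ 2 := pow_two_pos_of_ne_zero h2.ne
  have h4 : (0:ℝ) < (a - b * x) ^ 2 := pow_two_pos_of_ne_zero h1.ne
  have h5 : (a - b * x) ^ 2 ≤ (a - b * y) ^ 2 := by
    nlinarith [mul_nonneg (mul_nonneg hb.le (sub_nonneg.mpr hxy))
      (by nlinarith : (0:ℝ) ≤ b * y + b * x - 2 * a)]
  have ha3 : a ^ 3 ≤ 0 := by nlinarith [sq_nonneg a, mul_nonneg (sq_nonneg a) (neg_nonneg.mpr ha.le)]
  rw [div_le_div_iff₀ h4 h3]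
  nlinarith [mul_nonneg (neg_nonneg.mpr ha3) (sub_nonneg.mpr h5)]

lemma rfun_tangent {c x : ℝ} (hc : 0 ≤ c) (hx : 0 ≤ x) :
    rfun a b c + (a ^ 3 / (a - b * c) ^ 2) * (x - c) ≤ rfun a b x := by
  set r1c := a ^ 3 / (a - b * c) ^ 2 with hr1c
  set g : ℝ → ℝ := fun t => rfun a b t - r1c * t with hg
  have hgd : ∀ t ∈ Ici (0:ℝ), HasDerivAt g (a ^ 3 / (a - b * t) ^ 2 - r1c) t := by
    intro t ht
    exact (hasDerivAt_rfun (ne_of_lt (rden_neg ha hb ht))).sub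
      (by simpa using (hasDerivAt_id t).const_mul r1c)
  have hgc : ContinuousOn g (Ici 0) := fun t ht => (hgd t ht).continuousAt.continuousWithinAt
  have key : g c ≤ g x := by
    rcases le_total c x with h | h
    · have hmono : MonotoneOn g (Icc c x) := by
        apply monotoneOn_of_deriv_nonneg (convex_Icc c x)
          (hgc.mono (fun u hu => hc.trans hu.1))
        · intro t ht
          rw [interior_Icc] at ht
          exact ((hgd t (hc.trans ht.1.le)).differentiableAt).differentiableWithinAt
        · intro t ht
          rw [interior_Icc] at ht
          have ht0 : (0:ℝ) ≤ t := hc.trans ht.1.le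
          rw [(hgd t ht0).deriv]
          exact sub_nonneg.mpr (r1_mono ha hb hc ht.1.le)
      exact hmono (left_mem_Icc.mpr h) (right_mem_Icc.mpr h) h
    · have hanti : AntitoneOn g (Icc x c) := by
        apply antitoneOn_of_deriv_nonpos (convex_Icc x c)
          (hgc.mono (fun u hu => hx.trans hu.1))
        · intro t ht
          rw [interior_Icc] at ht
          exact ((hgd t (hx.trans ht.1.le)).differentiableAt).differentiableWithinAt
        · intro t ht
          rw [interior_Icc] at ht
          have ht0 : (0:ℝ) ≤ t := hx.trans ht.1.le
          rw [(hgd t ht0).deriv]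
          exact sub_nonpos.mpr (r1_mono ha hb ht0 ht.2.le)
      exact hanti (left_mem_Icc.mpr h) (right_mem_Icc.mpr h) h
  simp only [hg] at key
  linarith

lemma intervalIntegrable_rfun {s t : ℝ} (hs : 0 ≤ s) (ht : 0 ≤ t) :
    IntervalIntegrable (rfun a b) MeasureTheory.volume s t :=
  ((continuousOn_rfun ha hb).mono (fun u hu => le_trans (le_min hs ht) hu.1)).intervalIntegrable

lemma rfun_midpoint {q : ℝ} (hq : 0 < q) :
    q * rfun a b (q / 2) ≤ ∫ t in (0:ℝ)..q, rfun a b t := by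
  have hq2 : (0:ℝ) ≤ q / 2 := by linarith
  set c2 := a ^ 3 / (a - b * (q / 2)) ^ 2 with hc2
  have hlin : ∀ s t : ℝ, IntervalIntegrable
      (fun t => rfun a b (q / 2) + c2 * (t - q / 2)) MeasureTheory.volume s t := by
    intro s t
    exact ((continuous_const.add (continuous_const.mul
      (continuous_id.sub continuous_const))).continuousOn).intervalIntegrable
  have heq : (∫ t in (0:ℝ)..q, (rfun a b (q / 2) + c2 * (t - q / 2)))
      = q * rfun a b (q / 2) := by
    have hd : ∀ t ∈ uIcc (0:ℝ) q, HasDerivAt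
        (fun t => rfun a b (q / 2) * t + c2 * (t - q / 2) ^ 2 / 2)
        (rfun a b (q / 2) + c2 * (t - q / 2)) t := by
      intro t _
      have h1 : HasDerivAt (fun t : ℝ => rfun a b (q / 2) * t) (rfun a b (q / 2)) t := by
        simpa using (hasDerivAt_id t).const_mul (rfun a b (q / 2))
      have h2 : HasDerivAt (fun t : ℝ => t - q / 2) 1 t := by
        simpa using (hasDerivAt_id t).sub_const (q / 2)
      have h3 : HasDerivAt (fun t : ℝ => (t - q / 2) ^ 2) (2 * (t - q / 2)) t := by
        simpa using h2.fun_pow 2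
      have h4 := (h3.const_mul c2).div_const 2
      refine (h1.fun_add h4).congr_deriv (Eq.symm ?_)
      ring
    rw [intervalIntegral.integral_eq_sub_of_hasDerivAt hd (hlin 0 q)]
    ring
  calc q * rfun a b (q / 2)
      = ∫ t in (0:ℝ)..q, (rfun a b (q / 2) + c2 * (t - q / 2)) := heq.symm
    _ ≤ ∫ t in (0:ℝ)..q, rfun a b t := by
        apply intervalIntegral.integral_mono_on hq.le (hlin 0 q)
          (intervalIntegrable_rfun ha hb le_rfl hq.le)
        intro t ht
        exact rfun_tangent ha hb hq2 ht.1

end R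



section D3
variable {f : ℝ → ℝ} (hf3 : ContDiff ℝ 3 f)
include hf3

lemma hasDerivAt_f (x : ℝ) : HasDerivAt f (deriv f x) x :=
  ((hf3.differentiable (by norm_num)) x).hasDerivAt

lemma hasDerivAt_p (x : ℝ) : HasDerivAt (deriv f) (iteratedDeriv 2 f x) x := by
  have h1 : Differentiable ℝ (iteratedDeriv 1 f) :=
    hf3.differentiable_iteratedDeriv 1 (by norm_num)
  rw [iteratedDeriv_one] at h1
  have := (h1 x).hasDerivAt
  have h2 : iteratedDeriv 2 f x = deriv (deriv f) x := by
    rw [show (2:ℕ) = 1 + 1 from rfl, iteratedDeriv_succ, iteratedDeriv_one]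
  rw [h2]
  exact this

lemma hasDerivAt_p2 (x : ℝ) :
    HasDerivAt (iteratedDeriv 2 f) (iteratedDeriv 3 f x) x := by
  have h1 : Differentiable ℝ (iteratedDeriv 2 f) :=
    hf3.differentiable_iteratedDeriv 2 (by norm_num)
  have := (h1 x).hasDerivAt
  have h2 : iteratedDeriv 3 f x = deriv (iteratedDeriv 2 f) x := by
    rw [show (3:ℕ) = 2 + 1 from rfl, iteratedDeriv_succ]
  rw [h2]
  exact this

omit hf3 in
lemma schwarzian_key {x : ℝ} (hpx : deriv f x ≠ 0) (hS : Schwarzian f x < 0) :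
    iteratedDeriv 3 f x * deriv f x < 3 / 2 * (iteratedDeriv 2 f x) ^ 2 := by
  have hkey : Schwarzian f x * (deriv f x) ^ 2
      = iteratedDeriv 3 f x * deriv f x - 3 / 2 * (iteratedDeriv 2 f x) ^ 2 := by
    rw [Schwarzian]; field_simp
  have hp2 : (0:ℝ) < (deriv f x) ^ 2 := pow_two_pos_of_ne_zero hpx
  nlinarith

end D3


lemma core_compare {f : ℝ → ℝ} (hf3 : ContDiff ℝ 3 f) {a b : ℝ} (ha : a < 0) (hb : 0 < b)
    (hf0 : f 0 = 0) (hfa : deriv f 0 = a) (hfb : iteratedDeriv 2 f 0 = 2 * b)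
    (hS : ∀ u, deriv f u ≠ 0 → Schwarzian f u < 0)
    {x₀ : ℝ} (hx₀ : 0 < x₀) (hneg : ∀ x ∈ Icc 0 x₀, deriv f x < 0) :
    ∀ x ∈ Ioc 0 x₀, rfun a b x < f x := by
  set p : ℝ → ℝ := deriv f with hp
  set p2 : ℝ → ℝ := iteratedDeriv 2 f with hp2
  set p3 : ℝ → ℝ := iteratedDeriv 3 f with hp3
  have hdf : ∀ x, HasDerivAt f (p x) x := hasDerivAt_f hf3
  have hdp : ∀ x, HasDerivAt p (p2 x) x := hasDerivAt_p hf3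
  have hdp2 : ∀ x, HasDerivAt p2 (p3 x) x := hasDerivAt_p2 hf3
  have hSkey : ∀ x, p x ≠ 0 → p3 x * p x < 3 / 2 * (p2 x) ^ 2 := fun x hx =>
    schwarzian_key hx (hS x hx)
  clear_value p p2 p3
  clear hp hp2 hp3 hS
  have hs : ∀ x ∈ Icc (0:ℝ) x₀, 0 < -p x := fun x hx => neg_pos.mpr (hneg x hx)
  set u : ℝ → ℝ := fun x => (Real.sqrt (-p x))⁻¹ with hu_def
  set u1 : ℝ → ℝ := fun x => p2 x / (2 * Real.sqrt (-p x) * (-p x)) with hu1_def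
  set u2 : ℝ → ℝ := fun x =>
    Real.sqrt (-p x) * (2 * p3 x * (-p x) + 3 * (p2 x) ^ 2) / (4 * (-p x) ^ 3) with hu2_def
  -- derivative of sqrt (-p)
  have hsqd : ∀ x ∈ Icc (0:ℝ) x₀,
      HasDerivAt (fun y => Real.sqrt (-p y)) (-p2 x / (2 * Real.sqrt (-p x))) x := by
    intro x hx
    have h1 : HasDerivAt (fun y => -p y) (-p2 x) x := (hdp x).neg
    have h2 := (Real.hasDerivAt_sqrt (hs x hx).ne').comp x h1
    refine h2.congr_deriv (Eq.symm ?_)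
    ring
  have hsqpos : ∀ x ∈ Icc (0:ℝ) x₀, 0 < Real.sqrt (-p x) :=
    fun x hx => Real.sqrt_pos.mpr (hs x hx)
  have hsqsq : ∀ x ∈ Icc (0:ℝ) x₀, Real.sqrt (-p x) * Real.sqrt (-p x) = -p x :=
    fun x hx => Real.mul_self_sqrt (hs x hx).le
  have hu : ∀ x ∈ Icc (0:ℝ) x₀, HasDerivAt u (u1 x) x := by
    intro x hx
    have h2 := (hsqd x hx).fun_inv (hsqpos x hx).ne'
    refine h2.congr_deriv (Eq.symm ?_)
    simp only [hu1_def]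
    set S := Real.sqrt (-p x) with hSdef
    have h3 : S * S = -p x := hsqsq x hx
    have h4 : S ≠ 0 := (hsqpos x hx).ne'
    rw [show p x = -(S * S) by linarith]
    field_simp
  have hu1 : ∀ x ∈ Icc (0:ℝ) x₀, HasDerivAt u1 (u2 x) x := by
    intro x hx
    have hden : HasDerivAt (fun y => 2 * Real.sqrt (-p y) * (-p y))
        (-3 * p2 x * Real.sqrt (-p x)) x := by
      have h1 : HasDerivAt (fun y => 2 * Real.sqrt (-p y))
          (2 * (-p2 x / (2 * Real.sqrt (-p x)))) x := (hsqd x hx).const_mul 2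
      have h2 : HasDerivAt (fun y => -p y) (-p2 x) x := (hdp x).neg
      have h3 := h1.fun_mul h2
      refine h3.congr_deriv (Eq.symm ?_)
      set S := Real.sqrt (-p x) with hSdef
      have h4 : S * S = -p x := hsqsq x hx
      have h5 : S ≠ 0 := (hsqpos x hx).ne'
      rw [show p x = -(S * S) by linarith]
      field_simp
      ring
    have hdne : 2 * Real.sqrt (-p x) * (-p x) ≠ 0 := by
      have := hsqpos x hx; have := hs x hx; positivity
    have h6 := (hdp2 x).fun_div hden hdne
    refine h6.congr_deriv (Eq.symm ?_)
    simp only [hu2_def]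
    set S := Real.sqrt (-p x) with hSdef
    have h4 : S * S = -p x := hsqsq x hx
    have h5 : S ≠ 0 := (hsqpos x hx).ne'
    rw [show p x = -(S * S) by linarith]
    field_simp
    ring
  have hu2pos : ∀ x ∈ Icc (0:ℝ) x₀, 0 < u2 x := by
    intro x hx
    have hkey := hSkey x (hneg x hx).ne
    have hN : 0 < 2 * p3 x * (-p x) + 3 * (p2 x) ^ 2 := by nlinarith
    have := hsqpos x hx
    have := hs x hx
    simp only [hu2_def]
    positivity
  set c : ℝ := ((-a) * Real.sqrt (-a))⁻¹ with hc_def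
  have hsa : (0:ℝ) < Real.sqrt (-a) := Real.sqrt_pos.mpr (by linarith)
  have hsasq : Real.sqrt (-a) * Real.sqrt (-a) = -a := Real.mul_self_sqrt (by linarith)
  have hcpos : 0 < c := inv_pos.mpr (mul_pos (by linarith : (0:ℝ) < -a) hsa)
  set w1 : ℝ → ℝ := fun x => u1 x - c * b with hw1_def
  set w : ℝ → ℝ := fun x => u x - c * (b * x - a) with hw_def
  have hp0 : p 0 = a := hfa
  have hp20 : p2 0 = 2 * b := hfb
  have hw0 : w 0 = 0 := by
    simp only [hw_def, hu_def, hp0, hc_def]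
    set T := Real.sqrt (-a) with hTdef
    have hTT : T * T = -a := hsasq
    have hTne : T ≠ 0 := hsa.ne'
    rw [show a = -(T * T) by linarith]
    field_simp
    ring
  have hw10 : w1 0 = 0 := by
    simp only [hw1_def, hu1_def, hp0, hp20, hc_def]
    set T := Real.sqrt (-a) with hTdef
    have hTT : T * T = -a := hsasq
    have hTne : T ≠ 0 := hsa.ne'
    rw [show a = -(T * T) by linarith]
    field_simp
    ring
  have hwd : ∀ x ∈ Icc (0:ℝ) x₀, HasDerivAt w (w1 x) x := by
    intro x hx
    have hlin : HasDerivAt (fun y : ℝ => c * (b * y - a)) (c * b) x := by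
      simpa using (((hasDerivAt_id x).const_mul b).sub_const a).const_mul c
    exact (hu x hx).sub hlin
  have hw1d : ∀ x ∈ Icc (0:ℝ) x₀, HasDerivAt w1 (u2 x) x :=
    fun x hx => (hu1 x hx).sub_const (c * b)
  have hw1mono : StrictMonoOn w1 (Icc 0 x₀) := by
    apply strictMonoOn_of_deriv_pos (convex_Icc 0 x₀)
      (fun x hx => (hw1d x hx).continuousAt.continuousWithinAt)
    intro x hx
    rw [interior_Icc] at hx
    rw [(hw1d x ⟨hx.1.le, hx.2.le⟩).deriv]
    exact hu2pos x ⟨hx.1.le, hx.2.le⟩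
  have hw1pos : ∀ x ∈ Ioc (0:ℝ) x₀, 0 < w1 x := by
    intro x hx
    have := hw1mono (left_mem_Icc.mpr hx₀.le) ⟨hx.1.le, hx.2⟩ hx.1
    rw [hw10] at this
    exact this
  have hwmono : StrictMonoOn w (Icc 0 x₀) := by
    apply strictMonoOn_of_deriv_pos (convex_Icc 0 x₀)
      (fun x hx => (hwd x hx).continuousAt.continuousWithinAt)
    intro x hx
    rw [interior_Icc] at hx
    rw [(hwd x ⟨hx.1.le, hx.2.le⟩).deriv]
    exact hw1pos x ⟨hx.1, hx.2.le⟩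
  have hwpos : ∀ x ∈ Ioc (0:ℝ) x₀, 0 < w x := by
    intro x hx
    have := hwmono (left_mem_Icc.mpr hx₀.le) ⟨hx.1.le, hx.2⟩ hx.1
    rw [hw0] at this
    exact this
  -- from u x > c(bx - a) deduce p x > a^3/(a-bx)^2
  have hderiv_gt : ∀ x ∈ Ioc (0:ℝ) x₀, a ^ 3 / (a - b * x) ^ 2 < p x := by
    intro x hx
    have hxIcc : x ∈ Icc (0:ℝ) x₀ := ⟨hx.1.le, hx.2⟩
    have hv : 0 < c * (b * x - a) := by
      have : 0 < b * x - a := by nlinarith [hx.1]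
      positivity
    have h1 : c * (b * x - a) < u x := by
      have := hwpos x hx; simp only [hw_def] at this; linarith
    have h2 : Real.sqrt (-p x) < (c * (b * x - a))⁻¹ := by
      have h3 := (hsqpos x hxIcc)
      rw [hu_def] at h1
      calc Real.sqrt (-p x) = ((Real.sqrt (-p x))⁻¹)⁻¹ := by rw [inv_inv]
        _ < (c * (b * x - a))⁻¹ := by
            apply inv_strictAnti₀ hv h1
    have h4 : -p x < ((c * (b * x - a))⁻¹) * ((c * (b * x - a))⁻¹) := by
      calc -p x = Real.sqrt (-p x) * Real.sqrt (-p x) := (hsqsq x hxIcc).symm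
        _ < _ := by
            apply mul_self_lt_mul_self (Real.sqrt_nonneg _) h2
    have h5 : ((c * (b * x - a))⁻¹) * ((c * (b * x - a))⁻¹) = (-a) ^ 3 / (b * x - a) ^ 2 := by
      rw [hc_def]
      have hba : b * x - a ≠ 0 := by nlinarith [hx.1]
      set T := Real.sqrt (-a) with hTdef
      have hTT : T * T = -a := hsasq
      have hTne : T ≠ 0 := hsa.ne'
      rw [show a = -(T * T) by linarith]
      field_simp
    rw [h5] at h4
    have h6 : (a - b * x) ^ 2 = (b * x - a) ^ 2 := by ring
    have h7 : a ^ 3 = -((-a) ^ 3) := by ring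
    rw [h6, h7, neg_div]
    linarith
  -- conclude f > r on Ioc
  have hFd : ∀ x ∈ Icc (0:ℝ) x₀, HasDerivAt (fun y => f y - rfun a b y)
      (p x - a ^ 3 / (a - b * x) ^ 2) x := by
    intro x hx
    exact (hdf x).sub (hasDerivAt_rfun (ne_of_lt (rden_neg ha hb hx.1)))
  have hFmono : StrictMonoOn (fun y => f y - rfun a b y) (Icc 0 x₀) := by
    apply strictMonoOn_of_deriv_pos (convex_Icc 0 x₀)
      (fun x hx => (hFd x hx).continuousAt.continuousWithinAt)
    intro x hx
    rw [interior_Icc] at hx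
    rw [(hFd x ⟨hx.1.le, hx.2.le⟩).deriv]
    have := hderiv_gt x ⟨hx.1, hx.2.le⟩
    linarith
  intro x hx
  have := hFmono (left_mem_Icc.mpr hx₀.le) ⟨hx.1.le, hx.2⟩ hx.1
  simp only at this
  rw [hf0] at this
  have hr0 : rfun a b 0 = 0 := by simp [rfun]
  rw [hr0] at this
  linarith

lemma continuous_deriv_f {f : ℝ → ℝ} (hf3 : ContDiff ℝ 3 f) : Continuous (deriv f) := by
  have h : Differentiable ℝ (deriv f) := by
    have h1 : Differentiable ℝ (iteratedDeriv 1 f) :=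
      hf3.differentiable_iteratedDeriv 1 (by norm_num)
    rwa [iteratedDeriv_one] at h1
  exact h.continuous

lemma deriv_neg_near_zero {f : ℝ → ℝ} (hf3 : ContDiff ℝ 3 f) {a : ℝ} (ha : a < 0)
    (hfa : deriv f 0 = a) : ∃ δ > 0, ∀ x ∈ Icc (0:ℝ) δ, deriv f x < 0 := by
  have hc : Continuous (deriv f) := continuous_deriv_f hf3
  have hopen : IsOpen {x : ℝ | deriv f x < 0} := isOpen_lt hc continuous_const
  have h0 : (0:ℝ) ∈ {x : ℝ | deriv f x < 0} := by simp [hfa, ha]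
  obtain ⟨ε, hε, hball⟩ := Metric.isOpen_iff.mp hopen 0 h0
  refine ⟨ε / 2, by linarith, fun x hx => hball ?_⟩
  rw [Metric.mem_ball, Real.dist_eq, sub_zero, abs_of_nonneg hx.1]
  linarith [hx.2]

lemma near_compare {f : ℝ → ℝ} (hf3 : ContDiff ℝ 3 f) {a b : ℝ} (ha : a < 0) (hb : 0 < b)
    (hf0 : f 0 = 0) (hfa : deriv f 0 = a) (hfb : iteratedDeriv 2 f 0 = 2 * b)
    (hS : ∀ u, deriv f u ≠ 0 → Schwarzian f u < 0) :
    ∃ δ > 0, ∀ x ∈ Ioc (0:ℝ) δ, rfun a b x < f x := by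
  obtain ⟨δ, hδ, hneg⟩ := deriv_neg_near_zero hf3 ha hfa
  exact ⟨δ, hδ, core_compare hf3 ha hb hf0 hfa hfb hS hδ hneg⟩

lemma global_compare {f : ℝ → ℝ} (hf3 : ContDiff ℝ 3 f) {a b : ℝ} (ha : a < 0) (hb : 0 < b)
    (hf0 : f 0 = 0) (hfa : deriv f 0 = a) (hfb : iteratedDeriv 2 f 0 = 2 * b)
    (hS : ∀ u, deriv f u ≠ 0 → Schwarzian f u < 0)
    (huniq : ∀ u v : ℝ, deriv f u = 0 → deriv f v = 0 → u = v)
    (hextr : ∀ u : ℝ, deriv f u = 0 → IsLocalExtr f u) :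
    ∀ x : ℝ, 0 < x → rfun a b x ≤ f x := by
  intro x₀ hx₀
  have hcf : Continuous f := hf3.continuous
  have hcp : Continuous (deriv f) := continuous_deriv_f hf3
  by_cases hcase : ∀ x ∈ Icc (0:ℝ) x₀, deriv f x < 0
  · exact (core_compare hf3 ha hb hf0 hfa hfb hS hx₀ hcase x₀ ⟨hx₀, le_rfl⟩).le
  push_neg at hcase
  obtain ⟨y, hy, hy0⟩ := hcase
  -- there is a zero of deriv f in [0, y]
  have hzero : ∃ z ∈ Icc (0:ℝ) y, deriv f z = 0 := by
    have h0 : (0:ℝ) ∈ Icc (deriv f 0) (deriv f y) := by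
      rw [hfa]; exact ⟨ha.le, hy0⟩
    obtain ⟨z, hz, hz0⟩ := intermediate_value_Icc hy.1 (hcp.continuousOn) h0
    exact ⟨z, hz, hz0⟩
  set S : Set ℝ := {x | x ∈ Icc (0:ℝ) x₀ ∧ deriv f x = 0} with hSdef
  have hSne : S.Nonempty := by
    obtain ⟨z, hz, hz0⟩ := hzero
    exact ⟨z, ⟨⟨hz.1, hz.2.trans hy.2⟩, hz0⟩⟩
  have hScl : IsClosed S := by
    have : S = Icc (0:ℝ) x₀ ∩ (deriv f) ⁻¹' {0} := by
      ext t; simp [hSdef, mem_Icc]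
    rw [this]
    exact isClosed_Icc.inter (isClosed_singleton.preimage hcp)
  have hSbdd : BddBelow S := ⟨0, fun t ht => ht.1.1⟩
  set c := sInf S with hcdef
  have hcS : c ∈ S := hScl.csInf_mem hSne hSbdd
  have hpc : deriv f c = 0 := hcS.2
  have hc0 : 0 < c := by
    rcases eq_or_lt_of_le hcS.1.1 with h | h
    · exfalso; rw [← h, hfa] at hpc; exact absurd hpc ha.ne
    · exact h
  have hcx₀ : c ≤ x₀ := hcS.1.2
  have hbelow : ∀ t ∈ Ico (0:ℝ) c, deriv f t < 0 := by
    intro t ht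
    by_contra hcon
    push_neg at hcon
    have h0 : (0:ℝ) ∈ Icc (deriv f 0) (deriv f t) := by rw [hfa]; exact ⟨ha.le, hcon⟩
    obtain ⟨w, hw, hw0⟩ := intermediate_value_Icc ht.1 (hcp.continuousOn) h0
    have hwS : w ∈ S := ⟨⟨hw.1, (hw.2.trans ht.2.le).trans hcx₀⟩, hw0⟩
    have hcw : c ≤ w := by rw [hcdef]; exact csInf_le hSbdd hwS
    exact absurd ht.2 (not_lt.mpr (hcw.trans hw.2))
  -- f ≥ r on (0, c]
  have hFpos : ∀ x ∈ Ioo (0:ℝ) c, rfun a b x < f x := by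
    intro x hx
    have hd : (0:ℝ) < (x + c) / 2 := by linarith [hx.1]
    have hdc : (x + c) / 2 < c := by linarith [hx.2]
    exact core_compare hf3 ha hb hf0 hfa hfb hS hd
      (fun t ht => hbelow t ⟨ht.1, lt_of_le_of_lt ht.2 hdc⟩) x ⟨hx.1, by linarith [hx.2]⟩
  have hfcr : rfun a b c ≤ f c := by
    have hcont : ContinuousAt (fun y => f y - rfun a b y) c := by
      exact (hcf.continuousAt).sub
        (hasDerivAt_rfun (ne_of_lt (rden_neg ha hb hc0.le))).continuousAt
    have htend : Filter.Tendsto (fun y => f y - rfun a b y) (nhdsWithin c (Iio c))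
        (nhds (f c - rfun a b c)) := hcont.continuousWithinAt.tendsto
    have hev : ∀ᶠ y in nhdsWithin c (Iio c), 0 ≤ f y - rfun a b y := by
      filter_upwards [Ioo_mem_nhdsLT_of_mem (⟨hc0, le_refl c⟩ : c ∈ Ioc 0 c)] with y hy
      exact sub_nonneg.mpr (hFpos y hy).le
    have := ge_of_tendsto htend hev
    linarith
  rcases eq_or_lt_of_le hcx₀ with hceq | hclt
  · rw [← hceq]; exact hfcr
  -- deriv f ≠ 0 on (c, x₀]
  have hne0 : ∀ t ∈ Ioc c x₀, deriv f t ≠ 0 := by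
    intro t ht h0
    exact absurd (huniq t c h0 hpc) (ne_of_gt ht.1)
  by_cases hsgn : ∀ t ∈ Ioc c x₀, 0 < deriv f t
  · -- f increasing on [c, x₀]
    have hmono : StrictMonoOn f (Icc c x₀) := by
      apply strictMonoOn_of_deriv_pos (convex_Icc c x₀) hcf.continuousOn
      intro t ht
      rw [interior_Icc] at ht
      exact hsgn t ⟨ht.1, ht.2.le⟩
    have h1 : f c < f x₀ := hmono ⟨le_refl c, hcx₀⟩ ⟨hcx₀, le_refl x₀⟩ hclt
    have h2 : rfun a b x₀ ≤ rfun a b c :=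
      antitoneOn_rfun ha hb hc0.le hx₀.le hcx₀
    linarith
  · -- then deriv f < 0 on (c, x₀], contradiction with local extremum at c
    push_neg at hsgn
    obtain ⟨y₁, hy₁, hy₁0⟩ := hsgn
    have hy₁neg : deriv f y₁ < 0 := lt_of_le_of_ne hy₁0 (hne0 y₁ hy₁)
    have hallneg : ∀ t ∈ Ioc c x₀, deriv f t < 0 := by
      intro t ht
      by_contra hcon
      push_neg at hcon
      have hcon' : 0 < deriv f t := lt_of_le_of_ne hcon (Ne.symm (hne0 t ht))
      -- IVT between y₁ and t gives a zero in (c, x₀]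
      have h0mem : (0:ℝ) ∈ Icc (deriv f y₁) (deriv f t) := ⟨hy₁neg.le, hcon'.le⟩
      obtain ⟨w, hw, hw0⟩ := intermediate_value_uIcc (hcp.continuousOn)
        (show (0:ℝ) ∈ uIcc (deriv f y₁) (deriv f t) by
          rw [uIcc_of_le (by linarith)]; exact h0mem)
      have hwmem : w ∈ Ioc c x₀ := by
        rcases le_total y₁ t with h | h
        · rw [uIcc_of_le h] at hw
          exact ⟨lt_of_lt_of_le hy₁.1 hw.1, hw.2.trans ht.2⟩
        · rw [uIcc_comm, uIcc_of_le h] at hw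
          exact ⟨lt_of_lt_of_le ht.1 hw.1, hw.2.trans hy₁.2⟩
      exact hne0 w hwmem hw0
    exfalso
    have hanti1 : StrictAntiOn f (Icc 0 c) := by
      apply strictAntiOn_of_deriv_neg (convex_Icc 0 c) hcf.continuousOn
      intro t ht
      rw [interior_Icc] at ht
      exact hbelow t ⟨ht.1.le, ht.2⟩
    have hanti2 : StrictAntiOn f (Icc c x₀) := by
      apply strictAntiOn_of_deriv_neg (convex_Icc c x₀) hcf.continuousOn
      intro t ht
      rw [interior_Icc] at ht
      exact hallneg t ⟨ht.1, ht.2.le⟩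
    rcases hextr c hpc with hminl | hmaxl
    · obtain ⟨η, hη, hloc⟩ := Metric.eventually_nhds_iff.mp hminl
      set y := min (c + η / 2) x₀ with hydef
      have hyc : c < y := lt_min (by linarith) hclt
      have hyx : y ≤ x₀ := min_le_right _ _
      have hdist : dist y c < η := by
        rw [Real.dist_eq, abs_of_pos (by linarith : (0:ℝ) < y - c)]
        have : y ≤ c + η / 2 := min_le_left _ _
        linarith
      have h1 : f c ≤ f y := hloc hdist
      have h2 : f y < f c := hanti2 ⟨le_refl c, hcx₀⟩ ⟨hyc.le, hyx⟩ hyc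
      linarith
    · obtain ⟨η, hη, hloc⟩ := Metric.eventually_nhds_iff.mp hmaxl
      set y := max (c - η / 2) (c / 2) with hydef
      have hyc : y < c := max_lt (by linarith) (by linarith)
      have hy0 : 0 ≤ y := le_max_of_le_right (by linarith)
      have hdist : dist y c < η := by
        rw [Real.dist_eq, abs_of_neg (by linarith : y - c < 0)]
        have : c - η / 2 ≤ y := le_max_left _ _
        linarith
      have h1 : f y ≤ f c := hloc hdist
      have h2 : f c < f y := hanti1 ⟨hy0, hyc.le⟩ ⟨hc0.le, le_refl c⟩ hyc
      linarith

end Aux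

/-- Lemma 3.2 (Lemma 44): for an entire solution `z` of `x'(t) = f(x(t-1))`
bounded between `m < 0 < M` and attaining its minimum `m` at `t = 1`, one has
`m > D(M)` and `m > r(-r(M)/2)`. -/
theorem min_estimate_entire_solution
    (f : ℝ → ℝ) (hf : HypH f) (h2 : 0 < iteratedDeriv 2 f 0)
    (a b : ℝ) (haeq : a = deriv f 0) (hbeq : b = iteratedDeriv 2 f 0 / 2)
    (z : ℝ → ℝ) (hz : ∀ t : ℝ, HasDerivAt z (f (z (t - 1))) t)
    (m M : ℝ) (hm : m < 0) (hM : 0 < M)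
    (hbd : ∀ t : ℝ, m ≤ z t ∧ z t ≤ M) (hmin : z 1 = m) :
    m > Dfun a b M ∧ m > rfun a b (-(rfun a b M) / 2) := by
  obtain ⟨hf3, hH1, hH1', hbdd, huniq, hextr, hS⟩ := hf
  have ha : a < 0 := haeq ▸ hH1'
  have hb : 0 < b := by rw [hbeq]; linarith
  have hfa : deriv f 0 = a := haeq.symm
  have hfb : iteratedDeriv 2 f 0 = 2 * b := by rw [hbeq]; ring
  have hcf : Continuous f := hf3.continuous
  -- f 0 = 0
  have hf0 : f 0 = 0 := by
    have hle : f 0 ≤ 0 := by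
      have htend : Filter.Tendsto f (nhdsWithin 0 (Ioi 0)) (nhds (f 0)) :=
        hcf.continuousAt.continuousWithinAt.tendsto
      have hev : ∀ᶠ x in nhdsWithin (0:ℝ) (Ioi 0), f x ≤ 0 := by
        filter_upwards [self_mem_nhdsWithin] with x hx
        have hx' : (0:ℝ) < x := hx
        nlinarith [hH1 x (ne_of_gt hx')]
      exact le_of_tendsto htend hev
    have hge : 0 ≤ f 0 := by
      have htend : Filter.Tendsto f (nhdsWithin 0 (Iio 0)) (nhds (f 0)) :=
        hcf.continuousAt.continuousWithinAt.tendsto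
      have hev : ∀ᶠ x in nhdsWithin (0:ℝ) (Iio 0), 0 ≤ f x := by
        filter_upwards [self_mem_nhdsWithin] with x hx
        have hx' : x < (0:ℝ) := hx
        nlinarith [hH1 x (ne_of_lt hx')]
      exact ge_of_tendsto htend hev
    linarith
  have hfpos : ∀ x : ℝ, x < 0 → 0 < f x := by
    intro x hx; nlinarith [hH1 x (ne_of_lt hx)]
  have hfnonneg : ∀ x : ℝ, x ≤ 0 → 0 ≤ f x := by
    intro x hx
    rcases eq_or_lt_of_le hx with h | h
    · rw [h, hf0]
    · exact (hfpos x h).le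
  have hcomp : ∀ x : ℝ, 0 < x → rfun a b x ≤ f x :=
    global_compare hf3 ha hb hf0 hfa hfb hS huniq hextr
  obtain ⟨δ, hδ, hstrict⟩ := near_compare hf3 ha hb hf0 hfa hfb hS
  have hzcont : Continuous z := continuous_iff_continuousAt.mpr (fun t => (hz t).continuousAt)
  -- z 0 = 0
  have hz0 : z 0 = 0 := by
    have hlocmin : IsLocalMin z 1 :=
      Filter.Eventually.of_forall (fun y => hmin ▸ (hbd y).1)
    have hd0 : deriv z 1 = 0 := hlocmin.deriv_eq_zero
    have hd1 : deriv z 1 = f (z 0) := by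
      have h := (hz 1).deriv
      norm_num at h
      exact h
    have hfz0 : f (z 0) = 0 := by rw [← hd1, hd0]
    by_contra h
    have := hH1 (z 0) h
    rw [hfz0] at this
    simp at this
  set q : ℝ := -rfun a b M with hqdef
  have hq : 0 < q := neg_pos.mpr (rfun_neg ha hb hM)
  have hrM : rfun a b M = -q := by rw [hqdef]; ring
  -- f is bounded below by -q on (-∞, M]
  have hfbound : ∀ x : ℝ, x ≤ M → -q ≤ f x := by
    intro x hx
    rcases le_or_gt x 0 with h | h
    · linarith [hfnonneg x h]
    · calc -q = rfun a b M := hrM.symm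
        _ ≤ rfun a b x := antitoneOn_rfun ha hb h.le hM.le hx
        _ ≤ f x := hcomp x h
  have hint_fz : ∀ s t : ℝ, IntervalIntegrable (fun u => f (z (u - 1)))
      MeasureTheory.volume s t :=
    fun s t => ((hcf.comp (hzcont.comp (continuous_id.sub continuous_const))).continuousOn).intervalIntegrable
  -- upper bound z s ≤ (-s) * q on [-1, 0]
  have step3 : ∀ s ∈ Icc (-1:ℝ) 0, z s ≤ (-s) * q := by
    intro s hs
    have hFTC : ∫ u in s..0, f (z (u - 1)) = z 0 - z s :=
      intervalIntegral.integral_eq_sub_of_hasDerivAt (fun u _ => hz u) (hint_fz s 0)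
    have hlb : ((0:ℝ) - s) • (-q) ≤ ∫ u in s..0, f (z (u - 1)) := by
      rw [← intervalIntegral.integral_const]
      exact intervalIntegral.integral_mono_on hs.2
        (intervalIntegrable_const) (hint_fz s 0)
        (fun u _ => hfbound (z (u - 1)) (hbd (u - 1)).2)
    have : z s = - ∫ u in s..0, f (z (u - 1)) := by rw [hFTC, hz0]; ring
    rw [this]
    have h2 : ((0:ℝ) - s) • (-q) = s * q := by rw [smul_eq_mul]; ring
    rw [h2] at hlb
    linarith
  -- m as an integral
  have hmint : ∫ s in (-1:ℝ)..0, f (z s) = m := by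
    have hFTC : ∫ t in (0:ℝ)..1, f (z (t - 1)) = z 1 - z 0 :=
      intervalIntegral.integral_eq_sub_of_hasDerivAt (fun u _ => hz u) (hint_fz 0 1)
    have hsub := intervalIntegral.integral_comp_sub_right (fun s => f (z s)) 1 (a := (0:ℝ)) (b := 1)
    norm_num at hsub
    rw [hsub] at hFTC
    rw [hFTC, hmin, hz0]
    ring
  set g : ℝ → ℝ := fun s => rfun a b (min M ((-s) * q)) with hgdef
  have hcmem : ∀ s ∈ Icc (-1:ℝ) 0, 0 ≤ min M ((-s) * q) := by
    intro s hs
    exact le_min hM.le (mul_nonneg (by linarith [hs.2]) hq.le)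
  have hgle : ∀ s ∈ Icc (-1:ℝ) 0, g s ≤ f (z s) := by
    intro s hs
    have hzle : z s ≤ min M ((-s) * q) := le_min (hbd s).2 (step3 s hs)
    rcases le_or_gt (z s) 0 with h | h
    · exact le_trans (rfun_nonpos ha hb (hcmem s hs)) (hfnonneg (z s) h)
    · calc g s ≤ rfun a b (z s) := antitoneOn_rfun ha hb h.le (hcmem s hs) hzle
        _ ≤ f (z s) := hcomp (z s) h
  -- strict inequality at s₀
  set s₀ : ℝ := -(min 1 (δ / q)) / 2 with hs₀def
  have hmin1 : 0 < min 1 (δ / q) := lt_min one_pos (div_pos hδ hq)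
  have hmin1' : min 1 (δ / q) ≤ 1 := min_le_left _ _
  have hs₀mem : s₀ ∈ Icc (-1:ℝ) 0 := by
    constructor
    · rw [hs₀def]; linarith
    · rw [hs₀def]; linarith
  have hs₀q : (-s₀) * q ≤ δ / 2 := by
    rw [hs₀def]
    have h1 : min 1 (δ / q) ≤ δ / q := min_le_right _ _
    have : (-(-(min 1 (δ / q)) / 2)) * q = (min 1 (δ / q)) * q / 2 := by ring
    rw [this]
    calc (min 1 (δ / q)) * q / 2 ≤ (δ / q) * q / 2 := by
          have := mul_le_mul_of_nonneg_right h1 hq.le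
          linarith
      _ = δ / 2 := by field_simp
  have hs₀pos : 0 < (-s₀) * q := by
    rw [hs₀def]
    have : (-(-(min 1 (δ / q)) / 2)) = min 1 (δ / q) / 2 := by ring
    rw [this]
    positivity
  have hc₀pos : 0 < min M ((-s₀) * q) := lt_min hM hs₀pos
  have hc₀δ : min M ((-s₀) * q) ≤ δ := le_trans (min_le_right _ _) (hs₀q.trans (by linarith))
  have hs₀strict : g s₀ < f (z s₀) := by
    have hzle : z s₀ ≤ min M ((-s₀) * q) := le_min (hbd s₀).2 (step3 s₀ hs₀mem)
    rcases le_or_gt (z s₀) 0 with h | h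
    · exact lt_of_lt_of_le (rfun_neg ha hb hc₀pos) (hfnonneg (z s₀) h)
    · calc g s₀ ≤ rfun a b (z s₀) := antitoneOn_rfun ha hb h.le hc₀pos.le hzle
        _ < f (z s₀) := hstrict (z s₀) ⟨h, hzle.trans hc₀δ⟩
  -- continuity of g
  have hinner : Continuous (fun s : ℝ => min M ((-s) * q)) := by
    exact continuous_const.min ((continuous_neg.mul continuous_const))
  have hgcont : ContinuousOn g (Icc (-1:ℝ) 0) := by
    apply (continuousOn_rfun ha hb).comp hinner.continuousOn
    intro s hs
    exact hcmem s hs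
  -- the strict integral inequality
  have hIlt : (∫ s in (-1:ℝ)..0, g s) < m := by
    rw [← hmint]
    exact intervalIntegral.integral_lt_integral_of_continuousOn_of_le_of_exists_lt
      (by norm_num) hgcont ((hcf.comp hzcont).continuousOn)
      (fun x hx => hgle x ⟨hx.1.le, hx.2⟩) ⟨s₀, hs₀mem, hs₀strict⟩
  -- substitution identity
  have hsubst : ∀ c : ℝ, (∫ s in (-c)..0, rfun a b ((-s) * q))
      = q⁻¹ * ∫ t in (0:ℝ)..(q * c), rfun a b t := by
    intro c
    have h1 : (fun s : ℝ => rfun a b ((-s) * q)) = fun s : ℝ => (fun t => rfun a b (q * t)) (-s) := by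
      funext s; rw [mul_comm]
    rw [h1, intervalIntegral.integral_comp_neg (fun t => rfun a b (q * t))]
    rw [intervalIntegral.integral_comp_mul_left (rfun a b) hq.ne']
    norm_num
  have huIcc : uIcc (-1:ℝ) 0 = Icc (-1:ℝ) 0 := uIcc_of_le (by norm_num)
  have hgcont' : ContinuousOn g (uIcc (-1:ℝ) 0) := by rw [huIcc]; exact hgcont
  have hgint : IntervalIntegrable g MeasureTheory.volume (-1) 0 := hgcont'.intervalIntegrable
  have hinner2cont : ContinuousOn (fun s : ℝ => rfun a b ((-s) * q)) (Icc (-1:ℝ) 0) := by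
    apply (continuousOn_rfun ha hb).comp (continuous_neg.mul continuous_const).continuousOn
    intro s hs
    exact mul_nonneg (by simp; linarith [hs.2]) hq.le
  have hinner2int : IntervalIntegrable (fun s : ℝ => rfun a b ((-s) * q))
      MeasureTheory.volume (-1) 0 := by
    apply ContinuousOn.intervalIntegrable
    rw [huIcc]; exact hinner2cont
  -- lower bound for the g-integral via convexity
  have hIconv : rfun a b (q / 2) ≤ ∫ s in (-1:ℝ)..0, g s := by
    have h1 : (∫ s in (-1:ℝ)..0, rfun a b ((-s) * q)) ≤ ∫ s in (-1:ℝ)..0, g s := by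
      apply intervalIntegral.integral_mono_on (by norm_num) hinner2int hgint
      intro s hs
      have h2 : (0:ℝ) ≤ (-s) * q := mul_nonneg (by linarith [hs.2]) hq.le
      exact antitoneOn_rfun ha hb (hcmem s hs) h2 (min_le_right _ _)
    have h2 : (∫ s in (-1:ℝ)..0, rfun a b ((-s) * q))
        = q⁻¹ * ∫ t in (0:ℝ)..q, rfun a b t := by
      have := hsubst 1
      rw [mul_one] at this
      simpa using this
    have h3 := rfun_midpoint ha hb hq
    have h4 : rfun a b (q / 2) ≤ q⁻¹ * ∫ t in (0:ℝ)..q, rfun a b t := by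
      have h5 := mul_le_mul_of_nonneg_left h3 (inv_nonneg.mpr hq.le)
      have h6 : q⁻¹ * (q * rfun a b (q / 2)) = rfun a b (q / 2) := by field_simp
      linarith
    linarith
  constructor
  · -- m > Dfun a b M
    rcases lt_or_ge M q with hMq | hqM
    · -- case A
      have hcond : rfun a b M < -M := by rw [hrM]; linarith
      rw [Dfun, if_pos hcond, Afun, if_neg hM.ne']
      have hMq1 : M / q ≤ 1 := (div_le_one hq).mpr hMq.le
      have hMq0 : 0 ≤ M / q := div_nonneg hM.le hq.le
      have hsub1 : uIcc (-1:ℝ) (-(M/q)) ⊆ Icc (-1:ℝ) 0 := by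
        rw [uIcc_of_le (by linarith)]
        exact Icc_subset_Icc le_rfl (by linarith)
      have hsub2 : uIcc (-(M/q)) (0:ℝ) ⊆ Icc (-1:ℝ) 0 := by
        rw [uIcc_of_le (by linarith)]
        exact Icc_subset_Icc (by linarith) le_rfl
      have hint1 : IntervalIntegrable g MeasureTheory.volume (-1) (-(M/q)) :=
        (hgcont.mono hsub1).intervalIntegrable
      have hint2 : IntervalIntegrable g MeasureTheory.volume (-(M/q)) 0 :=
        (hgcont.mono hsub2).intervalIntegrable
      have hsplit : (∫ s in (-1:ℝ)..(-(M/q)), g s) + (∫ s in (-(M/q))..(0:ℝ), g s)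
          = ∫ s in (-1:ℝ)..0, g s :=
        intervalIntegral.integral_add_adjacent_intervals hint1 hint2
      have hpiece1 : (∫ s in (-1:ℝ)..(-(M/q)), g s) = ((-(M/q)) - (-1)) * rfun a b M := by
        rw [intervalIntegral.integral_congr (g := fun _ => rfun a b M), intervalIntegral.integral_const, smul_eq_mul]
        intro s hs
        rw [uIcc_of_le (by linarith : (-1:ℝ) ≤ -(M/q))] at hs
        have h1 : M / q ≤ -s := by linarith [hs.2]
        have h2 : M ≤ (-s) * q := by
          rw [div_le_iff₀ hq] at h1
          linarith
        simp only [hgdef]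
        rw [min_eq_left h2]
      have hpiece2 : (∫ s in (-(M/q))..(0:ℝ), g s) = q⁻¹ * ∫ t in (0:ℝ)..M, rfun a b t := by
        have hcongr : (∫ s in (-(M/q))..(0:ℝ), g s)
            = ∫ s in (-(M/q))..(0:ℝ), rfun a b ((-s) * q) := by
          apply intervalIntegral.integral_congr
          intro s hs
          rw [uIcc_of_le (by linarith : -(M/q) ≤ (0:ℝ))] at hs
          have h1 : -s ≤ M / q := by linarith [hs.1]
          have h2 : (-s) * q ≤ M := by
            have h3 := mul_le_mul_of_nonneg_right h1 hq.le
            rwa [div_mul_cancel₀ _ hq.ne'] at h3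
          simp only [hgdef]
          rw [min_eq_right h2]
        rw [hcongr, hsubst (M/q)]
        congr 1
        congr 1
        field_simp
      have hJ : (∫ t in M..(0:ℝ), rfun a b t) = - ∫ t in (0:ℝ)..M, rfun a b t :=
        intervalIntegral.integral_symm 0 M
      have hIeq : (∫ s in (-1:ℝ)..0, g s)
          = M + rfun a b M + (1 / rfun a b M) * ∫ t in M..(0:ℝ), rfun a b t := by
        rw [← hsplit, hpiece1, hpiece2, hJ, hrM]
        field_simp
        ring
      rw [← hIeq]
      exact hIlt
    · -- case B
      have hcond : ¬ (rfun a b M < -M) := by rw [hrM]; push_neg; linarith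
      rw [Dfun, if_neg hcond, Bfun, if_neg hM.ne']
      have hIeq : (∫ s in (-1:ℝ)..0, g s)
          = (1 / rfun a b M) * ∫ t in (-(rfun a b M))..(0:ℝ), rfun a b t := by
        have hcongr : (∫ s in (-1:ℝ)..0, g s)
            = ∫ s in (-1:ℝ)..0, rfun a b ((-s) * q) := by
          apply intervalIntegral.integral_congr
          intro s hs
          rw [huIcc] at hs
          have h1 : (-s) * q ≤ M := by nlinarith [hs.1, hs.2]
          simp only [hgdef]
          rw [min_eq_right h1]
        have hJ : (∫ t in q..(0:ℝ), rfun a b t) = - ∫ t in (0:ℝ)..q, rfun a b t :=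
          intervalIntegral.integral_symm 0 q
        have hq1 : -rfun a b M = q := by rw [hrM]; ring
        rw [hcongr, hq1, hJ, hrM]
        have := hsubst 1
        rw [mul_one] at this
        have h2 : (∫ s in (-1:ℝ)..0, rfun a b ((-s) * q))
            = q⁻¹ * ∫ t in (0:ℝ)..q, rfun a b t := by
          simpa using this
        rw [h2]
        field_simp
      rw [← hIeq]
      exact hIlt
  · -- m > rfun a b (-(rfun a b M) / 2)
    have hq2 : -(rfun a b M) / 2 = q / 2 := by rw [hrM]; ring
    rw [hq2]
    linarith
end

section
/- Let f : ℝ → ℝ be continuous, differentiable at 0, bounded below, with x·f(x) < 0 for all x ≠ 0 and (f(x) − f'(0)x)·x > 0 for all x ≠ 0. Let m < 0 < M. (i) If z : ℝ → ℝ is an entire solution of x'(t) = f(x(t−1)) with m ≤ z(t) ≤ M for all t and z(1) = m, then m > −(f'(0))²·M/2 whenever f'(0) < 0, and m > (f'(0) + 1/2)·M whenever f'(0) ≤ −1. (ii) If y : ℝ → ℝ is an entire solution with m ≤ y(t) ≤ M for all t and y(1) = M, then M < f'(0)·m whenever f'(0) < 0, and M < (f'(0) + 1/2)·m whenever f'(0)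 ≤ −1. -/
open Real Set MeasureTheory intervalIntegral

private lemma aux_min (f : ℝ → ℝ) (a : ℝ) (hc : Continuous f) (hf0 : f 0 = 0)
    (hpos : ∀ x : ℝ, 0 < x → f x < 0)
    (hneg : ∀ x : ℝ, x < 0 → 0 < f x)
    (ht1 : ∀ x : ℝ, 0 < x → a * x < f x)
    (m M : ℝ) (hm : m < 0) (hM : 0 < M)
    (z : ℝ → ℝ) (hz : ∀ t : ℝ, HasDerivAt z (f (z (t - 1))) t)
    (hb : ∀ t : ℝ, m ≤ z t ∧ z t ≤ M) (h1 : z 1 = m) :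
    (a < 0 → m > a * M) ∧ (a < 0 → m > -a ^ 2 * M / 2) ∧
      (a ≤ -1 → m > (a + 1 / 2) * M) := by
  have zc : Continuous z := continuous_iff_continuousAt.2 fun t => (hz t).continuousAt
  have Fc : Continuous fun u : ℝ => f (z (u - 1)) :=
    hc.comp (zc.comp (continuous_id.sub continuous_const))
  have Gc : Continuous fun s : ℝ => f (z s) := hc.comp zc
  have hz0 : z 0 = 0 := by
    have hloc : IsLocalMin z 1 :=
      Filter.Eventually.of_forall fun t => by rw [h1]; exact (hb t).1
    have hder := hloc.hasDerivAt_eq_zero (hz 1)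
    have h10 : (1:ℝ) - 1 = 0 := by norm_num
    rw [h10] at hder
    by_contra h
    rcases lt_or_gt_of_ne h with h' | h'
    · exact absurd hder (ne_of_gt (hneg _ h'))
    · exact absurd hder (ne_of_lt (hpos _ h'))
  have FTC : ∀ s t : ℝ, (∫ u in s..t, f (z (u - 1))) = z t - z s := fun s t =>
    intervalIntegral.integral_eq_sub_of_hasDerivAt (fun u _ => hz u)
      (Fc.intervalIntegrable s t)
  have hrep : (∫ s in (-1:ℝ)..0, f (z s)) = m := by
    have h := FTC 0 1
    rw [intervalIntegral.integral_comp_sub_right (fun s => f (z s)) 1] at h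
    norm_num [h1, hz0] at h
    exact h
  have faM : a < 0 → ∀ x : ℝ, x ≤ M → a * M < f x := by
    intro ha x hx
    rcases lt_trichotomy x 0 with h' | h' | h'
    · nlinarith [hneg x h']
    · rw [h', hf0]; nlinarith
    · nlinarith [ht1 x h', mul_le_mul_of_nonpos_left hx ha.le]
  have zb : ∀ _ : a < 0, ∀ s ∈ Icc (-1:ℝ) 0, z s ≤ a * M * s := by
    intro ha s hs
    have h := FTC s 0
    have hmono : (a * M) * (0 - s) ≤ ∫ u in s..0, f (z (u - 1)) := by
      have hle := intervalIntegral.integral_mono_on hs.2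
        (_root_.intervalIntegrable_const (μ := volume) (c := a * M)) (Fc.intervalIntegrable s 0)
        (fun u _ => (faM ha _ (hb (u - 1)).2).le)
      rw [intervalIntegral.integral_const, smul_eq_mul] at hle
      linarith [hle]
    rw [hz0] at h
    nlinarith [h, hmono]
  have claim1 : a < 0 → m > a * M := by
    intro ha
    have hint : 0 < ∫ s in (-1:ℝ)..0, (f (z s) - a * M) :=
      intervalIntegral_pos_of_pos_on
        ((Gc.sub continuous_const).intervalIntegrable _ _)
        (fun s _ => sub_pos.2 (faM ha _ (hb s).2)) (by norm_num)
    rw [intervalIntegral.integral_sub (Gc.intervalIntegrable _ _)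
        (_root_.intervalIntegrable_const), hrep,
        intervalIntegral.integral_const, smul_eq_mul] at hint
    nlinarith [hint]
  have claim2 : a < 0 → m > -a ^ 2 * M / 2 := by
    intro ha
    have ha2 : 0 < a ^ 2 := by nlinarith
    have hpt : ∀ s ∈ Ioo (-1:ℝ) 0, a ^ 2 * M * s < f (z s) := by
      intro s hs
      rcases le_or_gt (z s) 0 with h' | h'
      · have hf : 0 ≤ f (z s) := by
          rcases lt_or_eq_of_le h' with h'' | h''
          · exact (hneg _ h'').le
          · rw [h'', hf0]
        nlinarith [mul_pos (mul_pos ha2 hM) (neg_pos.2 hs.2)]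
      · have h2 := ht1 _ h'
        have h3 := zb ha s (Ioo_subset_Icc_self hs)
        nlinarith [mul_le_mul_of_nonpos_left h3 ha.le]
    have hint : 0 < ∫ s in (-1:ℝ)..0, (f (z s) - a ^ 2 * M * s) :=
      intervalIntegral_pos_of_pos_on
        ((Gc.sub ((continuous_const).mul continuous_id')).intervalIntegrable _ _)
        (fun s hs => sub_pos.2 (hpt s hs)) (by norm_num)
    have hval : (∫ s in (-1:ℝ)..0, a ^ 2 * M * s) = -(a ^ 2 * M) / 2 := by
      rw [intervalIntegral.integral_const_mul, integral_id]; ring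
    rw [intervalIntegral.integral_sub (g := fun s : ℝ => a ^ 2 * M * s) (Gc.intervalIntegrable _ _)
        (((continuous_const).mul continuous_id').intervalIntegrable _ _),
        hrep, hval] at hint
    nlinarith [hint]
  refine ⟨claim1, claim2, ?_⟩
  intro ha1
  have ha : a < 0 := lt_of_le_of_lt ha1 (by norm_num)
  set g : ℝ → ℝ := fun s => a * min (a * M * s) M with hg
  have gc : Continuous g :=
    continuous_const.mul (((continuous_const).mul continuous_id').min continuous_const)
  have hpt : ∀ s ∈ Ioo (-1:ℝ) 0, g s < f (z s) := by
    intro s hs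
    have haM : a * M < 0 := mul_neg_of_neg_of_pos ha hM
    have hmin0 : 0 < min (a * M * s) M := lt_min (by nlinarith [hs.2]) hM
    rcases le_or_gt (z s) 0 with h' | h'
    · have hf : 0 ≤ f (z s) := by
        rcases lt_or_eq_of_le h' with h'' | h''
        · exact (hneg _ h'').le
        · rw [h'', hf0]
      have hgneg : g s < 0 := mul_neg_of_neg_of_pos ha hmin0
      linarith
    · have h2 := ht1 _ h'
      have h3 : z s ≤ min (a * M * s) M :=
        le_min (zb ha s (Ioo_subset_Icc_self hs)) (hb s).2
      have h4 := mul_le_mul_of_nonpos_left h3 ha.le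
      simp only [hg]
      linarith
  have ha0 : a ≠ 0 := ha.ne
  have h1a : (-1:ℝ) ≤ 1 / a := by
    rw [le_div_iff_of_neg ha]; linarith
  have h1b : (1:ℝ) / a ≤ 0 := (div_neg_of_pos_of_neg one_pos ha).le
  have haM : a * M ≤ 0 := (mul_neg_of_neg_of_pos ha hM).le
  have hIval : (∫ s in (-1:ℝ)..0, g s) = (a + 1 / 2) * M := by
    have hsplit := intervalIntegral.integral_add_adjacent_intervals (μ := volume)
      (gc.intervalIntegrable (-1) (1 / a)) (gc.intervalIntegrable (1 / a) 0)
    have e1 : (∫ s in (-1:ℝ)..(1 / a), g s) = (∫ _ in (-1:ℝ)..(1 / a), a * M) := by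
      apply intervalIntegral.integral_congr
      intro s hs
      rw [uIcc_of_le h1a] at hs
      have h5 : a * M * (1 / a) = M := by field_simp
      have h6 : a * M * (1 / a) ≤ a * M * s := mul_le_mul_of_nonpos_left hs.2 haM
      have h7 : M ≤ a * M * s := by linarith
      simp [hg, min_eq_right h7]
    have e2 : (∫ s in (1 / a : ℝ)..0, g s) = (∫ s in (1 / a : ℝ)..0, a ^ 2 * M * s) := by
      apply intervalIntegral.integral_congr
      intro s hs
      rw [uIcc_of_le h1b] at hs
      have h5 : a * M * (1 / a) = M := by field_simp
      have h6 : a * M * s ≤ a * M * (1 / a) := mul_le_mul_of_nonpos_left hs.1 haM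
      have h7 : a * M * s ≤ M := by linarith
      simp only [hg, min_eq_left h7]
      ring
    rw [e1, e2] at hsplit
    rw [intervalIntegral.integral_const, smul_eq_mul,
      intervalIntegral.integral_const_mul, integral_id] at hsplit
    rw [← hsplit]
    field_simp
    ring
  have hint : 0 < ∫ s in (-1:ℝ)..0, (f (z s) - g s) :=
    intervalIntegral_pos_of_pos_on
      ((Gc.sub gc).intervalIntegrable _ _)
      (fun s hs => sub_pos.2 (hpt s hs)) (by norm_num)
  rw [intervalIntegral.integral_sub (Gc.intervalIntegrable _ _)
      (gc.intervalIntegrable _ _), hrep, hIval] at hint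
  linarith

/-- Remark 3.4: estimates for entire solutions when the graph of `f` lies
strictly above its tangent line `f'(0)·x` for `x > 0` and strictly below it
for `x < 0`. -/
theorem linear_minorant_estimates
    (f : ℝ → ℝ) (hc : Continuous f) (hd : DifferentiableAt ℝ f 0)
    (hbdd : ∃ C : ℝ, ∀ x : ℝ, C ≤ f x)
    (hfeed : ∀ x : ℝ, x ≠ 0 → x * f x < 0)
    (htan : ∀ x : ℝ, x ≠ 0 → (f x - deriv f 0 * x) * x > 0)
    (m M : ℝ) (hm : m < 0) (hM : 0 < M) :
    (∀ z : ℝ → ℝ, (∀ t : ℝ, HasDerivAt z (f (z (t - 1))) t) →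
      (∀ t : ℝ, m ≤ z t ∧ z t ≤ M) → z 1 = m →
      (deriv f 0 < 0 → m > -(deriv f 0) ^ 2 * M / 2) ∧
      (deriv f 0 ≤ -1 → m > (deriv f 0 + 1 / 2) * M)) ∧
    (∀ y : ℝ → ℝ, (∀ t : ℝ, HasDerivAt y (f (y (t - 1))) t) →
      (∀ t : ℝ, m ≤ y t ∧ y t ≤ M) → y 1 = M →
      (deriv f 0 < 0 → M < deriv f 0 * m) ∧
      (deriv f 0 ≤ -1 → M < (deriv f 0 + 1 / 2) * m)) := by
  have hpos : ∀ x : ℝ, 0 < x → f x < 0 := fun x hx => by nlinarith [hfeed x hx.ne']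
  have hneg : ∀ x : ℝ, x < 0 → 0 < f x := fun x hx => by nlinarith [hfeed x hx.ne]
  have ht1 : ∀ x : ℝ, 0 < x → deriv f 0 * x < f x := fun x hx => by
    nlinarith [htan x hx.ne']
  have ht2 : ∀ x : ℝ, x < 0 → f x < deriv f 0 * x := fun x hx => by
    nlinarith [htan x hx.ne]
  have hf0 : f 0 = 0 := by
    have hct : ContinuousAt f 0 := hc.continuousAt
    have hle : f 0 ≤ 0 :=
      le_of_tendsto (hct.continuousWithinAt.tendsto (s := Ioi 0))
        (eventually_nhdsWithin_of_forall fun x hx => (hpos x hx).le)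
    have hge : 0 ≤ f 0 :=
      ge_of_tendsto (hct.continuousWithinAt.tendsto (s := Iio 0))
        (eventually_nhdsWithin_of_forall fun x hx => (hneg x hx).le)
    linarith
  constructor
  · intro z hz hb h1
    obtain ⟨_, c2, c3⟩ :=
      aux_min f (deriv f 0) hc hf0 hpos hneg ht1 m M hm hM z hz hb h1
    exact ⟨c2, c3⟩
  · intro y hy hb h1
    obtain ⟨c1, _, c3⟩ :=
      aux_min (fun x => -f (-x)) (deriv f 0)
        ((hc.comp continuous_neg).neg) (by simp [hf0])
        (fun x hx => by simpa using hneg (-x) (by linarith))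
        (fun x hx => by simpa using hpos (-x) (by linarith))
        (fun x hx => by
          have h := ht2 (-x) (by linarith)
          show deriv f 0 * x < -f (-x)
          nlinarith)
        (-M) (-m) (by linarith) (by linarith)
        (fun t => -(y t)) (fun t => by have h := (hy t).neg; simp only [neg_neg]; exact h)
        (fun t => ⟨show -M ≤ -y t by linarith [(hb t).2],
          show -y t ≤ -m by linarith [(hb t).1]⟩)
        (by simp [h1])
    constructor
    · intro ha
      have := c1 ha
      nlinarith
    · intro ha
      have := c3 ha
      nlinarith
end

section
/- Let a < 0 < b, and define r(x) = a²x/(a − bx) on (a/b, +∞), A(x) = x + r(x) + (1/r(x))·∫ₓ⁰ r(t) dt for x ∈ (a/b, ∞) with x ≠ 0, A(0) = 0, and B(x) = (1/r(x))·∫_{−r(x)}⁰ r(s) ds for x ≠ 0, B(0) = 0. Then A is twice differentiable at 0 with A'(0) = a + 1/2 and A''(0) = 2b·(1 + 1/(6a)), and B is differentiable at 0 with B'(0) = −a²/2. -/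
open Real Set

open Filter in
lemma analyticAt_rlog {x : ℝ} (hx : 0 < x) : AnalyticAt ℝ Real.log x := by
  have h0 : AnalyticAt ℝ (fun y : ℝ => Complex.log (y : ℂ)) x :=
    ((analyticAt_clog (Complex.ofReal_mem_slitPlane.2 hx)).restrictScalars).comp
      (Complex.ofRealCLM.analyticAt _)
  have h1 : AnalyticAt ℝ (fun y : ℝ => (Complex.log (y : ℂ)).re) x :=
    (Complex.reCLM.analyticAt _).comp h0
  exact h1.congr (Filter.Eventually.of_forall fun y => Complex.log_ofReal_re y)

lemma analyticAt_deriv {f : ℝ → ℝ} {x : ℝ} (h : AnalyticAt ℝ f x) :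
    AnalyticAt ℝ (deriv f) x := by
  have h2 : AnalyticAt ℝ (fun y => fderiv ℝ f y 1) x :=
    ((ContinuousLinearMap.apply ℝ ℝ (1 : ℝ)).analyticAt _).comp h.fderiv
  exact h2.congr (Filter.Eventually.of_forall fun y => fderiv_apply_one_eq_deriv)

/-- Derivatives at 0 of the auxiliary functions: `A'(0) = a + 1/2`,
`A''(0) = 2b(1 + 1/(6a))` and `B'(0) = -a²/2`. -/
theorem Afun_Bfun_derivatives_at_zero
    (a b : ℝ) (ha : a < 0) (hb : 0 < b) :
    (DifferentiableAt ℝ (Afun a b) 0 ∧ deriv (Afun a b) 0 = a + 1 / 2) ∧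
    (DifferentiableAt ℝ (deriv (Afun a b)) 0 ∧
      deriv (deriv (Afun a b)) 0 = 2 * b * (1 + 1 / (6 * a))) ∧
    (DifferentiableAt ℝ (Bfun a b) 0 ∧ deriv (Bfun a b) 0 = -a ^ 2 / 2) := by
  have ha0 : a ≠ 0 := ne_of_lt ha
  have hb0 : b ≠ 0 := ne_of_gt hb
  set δ : ℝ := -a / (2 * b) with hδdef
  have hδ : 0 < δ := div_pos (by linarith) (by positivity)
  -- points with |t| < δ have b*t - a > 0
  have hpos : ∀ t : ℝ, |t| < δ → 0 < b * t - a := by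
    intro t ht
    have h1 : b * |t| < b * δ := mul_lt_mul_of_pos_left ht hb
    have h2 : b * δ = -a / 2 := by rw [hδdef]; field_simp
    have h3 : b * (-|t|) ≤ b * t :=
      mul_le_mul_of_nonneg_left (neg_abs_le t) hb.le
    nlinarith
  have hne : ∀ t : ℝ, |t| < δ → a - b * t ≠ 0 := by
    intro t ht
    have := hpos t ht
    intro h; nlinarith
  -- the antiderivative F and the slope function G
  set F : ℝ → ℝ := fun x => -(a ^ 2 * x / b) - a ^ 3 / b ^ 2 * Real.log (b * x - a)
    with hFdef
  set G : ℝ → ℝ := dslope F 0 with hGdef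
  -- eventual neighbourhood facts
  have hδev : ∀ᶠ y in nhds (0 : ℝ), |y| < δ := by
    simpa using eventually_abs_sub_lt (0 : ℝ) hδ
  -- derivative of rfun
  have hr : ∀ y : ℝ, a - b * y ≠ 0 → HasDerivAt (rfun a b) (a ^ 3 / (a - b * y) ^ 2) y := by
    intro y hy
    have h1 : HasDerivAt (fun x : ℝ => a ^ 2 * x) (a ^ 2) y := by
      simpa using (hasDerivAt_id y).const_mul (a ^ 2)
    have h2 : HasDerivAt (fun x : ℝ => a - b * x) (-b) y := by
      simpa using ((hasDerivAt_id y).const_mul b).const_sub a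
    have h3 := h1.div h2 hy
    convert h3 using 1
    iterate 3 rfl
    field_simp
    ring
  have hr1 : ∀ y : ℝ, a - b * y ≠ 0 →
      HasDerivAt (fun x : ℝ => a ^ 3 / (a - b * x) ^ 2) (2 * a ^ 3 * b / (a - b * y) ^ 3) y := by
    intro y hy
    have h2 : HasDerivAt (fun x : ℝ => a - b * x) (-b) y := by
      simpa using ((hasDerivAt_id y).const_mul b).const_sub a
    have h4 : HasDerivAt (fun x : ℝ => (a - b * x) ^ 2) (2 * (a - b * y) ^ (2 - 1) * -b) y :=
      h2.pow 2
    have h5 := (hasDerivAt_const y (a ^ 3)).div h4 (pow_ne_zero 2 hy)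
    convert h5 using 1
    iterate 3 rfl
    field_simp
    ring
  -- derivative of F
  have hF' : ∀ y : ℝ, |y| < δ → HasDerivAt F (rfun a b y) y := by
    intro y hy
    have hby : 0 < b * y - a := hpos y hy
    have hd : HasDerivAt (fun x : ℝ => b * x - a) b y := by
      simpa using ((hasDerivAt_id y).const_mul b).sub_const a
    have hlog : HasDerivAt (fun x : ℝ => Real.log (b * x - a)) (b / (b * y - a)) y :=
      hd.log (ne_of_gt hby)
    have h1 : HasDerivAt (fun x : ℝ => -(a ^ 2 * x / b)) (-(a ^ 2 / b)) y := by
      have h0 : HasDerivAt (fun x : ℝ => a ^ 2 / b * x) (a ^ 2 / b) y := by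
        simpa using (hasDerivAt_id y).const_mul (a ^ 2 / b)
      have h0n := h0.neg
      have heq : (fun x : ℝ => -(a ^ 2 / b * x)) = fun x : ℝ => -(a ^ 2 * x / b) := by
        funext x; ring
      rw [← heq]; exact h0n
    have h6 := h1.sub (hlog.const_mul (a ^ 3 / b ^ 2))
    have h7 : -(a ^ 2 / b) - a ^ 3 / b ^ 2 * (b / (b * y - a)) = rfun a b y := by
      have h8 : b * y - a ≠ 0 := ne_of_gt hby
      have h9 : a - b * y ≠ 0 := hne y hy
      rw [rfun]
      field_simp
      ring
    rw [hFdef]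
    rw [← h7]; exact h6
  -- FTC
  have hcont : ∀ x : ℝ, |x| < δ → ∀ t ∈ uIcc (0 : ℝ) x, |t| < δ := by
    intro x hx t ht
    have h1 : |t| ≤ |x| := by
      rcases Set.mem_uIcc.1 ht with ⟨h1, h2⟩ | ⟨h1, h2⟩ <;>
        (rw [abs_le]; constructor <;> nlinarith [le_abs_self x, neg_abs_le x])
    exact lt_of_le_of_lt h1 hx
  have hInt : ∀ x : ℝ, |x| < δ → ∫ t in (0 : ℝ)..x, rfun a b t = x * G x := by
    intro x hx
    have hftc : ∫ t in (0 : ℝ)..x, rfun a b t = F x - F 0 := by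
      apply intervalIntegral.integral_eq_sub_of_hasDerivAt
      · intro t ht
        exact hF' t (hcont x hx t ht)
      · apply ContinuousOn.intervalIntegrable
        apply ContinuousOn.div
        · fun_prop
        · fun_prop
        · intro t ht
          exact hne t (hcont x hx t ht)
    rw [hftc]
    have := sub_smul_dslope F 0 x
    simp only [sub_zero, smul_eq_mul] at this
    rw [← this, hGdef]
  -- analyticity of F and G at 0
  have hFa : AnalyticAt ℝ F 0 := by
    apply AnalyticAt.sub
    · apply AnalyticAt.neg
      apply AnalyticAt.div
      · exact (analyticAt_const.mul analyticAt_id)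
      · exact analyticAt_const
      · exact hb0
    · apply AnalyticAt.mul analyticAt_const
      have hlin : AnalyticAt ℝ (fun x : ℝ => b * x - a) 0 :=
        (analyticAt_const.mul analyticAt_id).sub analyticAt_const
      have hpt : (0 : ℝ) < b * 0 - a := by nlinarith
      have hcomp : AnalyticAt ℝ (Real.log ∘ fun x : ℝ => b * x - a) 0 :=
        AnalyticAt.comp (g := Real.log) (by simpa using analyticAt_rlog hpt) hlin
      exact hcomp
  have hGa : AnalyticAt ℝ G 0 := by
    obtain ⟨p, hp⟩ := hFa
    exact ⟨p.fslope, hp.has_fpower_series_dslope_fslope⟩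
  have hGev : ∀ᶠ y in nhds (0 : ℝ), AnalyticAt ℝ G y := hGa.eventually_analyticAt
  have hg1ev : ∀ᶠ y in nhds (0 : ℝ), AnalyticAt ℝ (deriv G) y :=
    hGev.mono fun y hy => analyticAt_deriv hy
  have hg2ev : ∀ᶠ y in nhds (0 : ℝ), AnalyticAt ℝ (deriv (deriv G)) y :=
    hg1ev.mono fun y hy => analyticAt_deriv hy
  -- F = F 0 + x * G x
  have hFeq : F = fun z => F 0 + z * G z := by
    funext z
    have := sub_smul_dslope F 0 z
    simp only [sub_zero, smul_eq_mul] at this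
    rw [hGdef]
    linarith [this]
  -- equation E0
  have E0 : ∀ᶠ y in nhds (0 : ℝ), rfun a b y = G y + y * deriv G y := by
    filter_upwards [hGev, hδev] with y hGy hyδ
    have h1 : HasDerivAt F (rfun a b y) y := hF' y hyδ
    have h2 := (hasDerivAt_const y (F 0)).add
      ((hasDerivAt_id y).mul hGy.differentiableAt.hasDerivAt)
    simp only [id_eq, zero_add, one_mul] at h2
    rw [hFeq] at h1
    have := h1.unique h2
    linarith [this]
  -- equation E1
  have E1 : ∀ᶠ y in nhds (0 : ℝ),
      a ^ 3 / (a - b * y) ^ 2 = 2 * deriv G y + y * deriv (deriv G) y := by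
    filter_upwards [E0.eventually_nhds, hGev, hg1ev, hδev] with y hE0y hGy hg1y hyδ
    have h1 : HasDerivAt (rfun a b) (a ^ 3 / (a - b * y) ^ 2) y := hr y (hne y hyδ)
    have h2 := hGy.differentiableAt.hasDerivAt.add
        ((hasDerivAt_id y).mul hg1y.differentiableAt.hasDerivAt)
    simp only [id_eq, one_mul] at h2
    have h3 : HasDerivAt (rfun a b)
        (deriv G y + (deriv G y + y * deriv (deriv G) y)) y :=
      h2.congr_of_eventuallyEq (hE0y.mono fun z hz => hz)
    have := h1.unique h3
    linarith [this]
  -- values at 0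
  have hG0 : G 0 = 0 := by
    have h := E0.self_of_nhds
    simp [rfun] at h
    linarith [h]
  have hg10 : deriv G 0 = a / 2 := by
    have h := E1.self_of_nhds
    simp only [mul_zero, sub_zero, zero_mul, add_zero] at h
    have h2 : a ^ 3 / a ^ 2 = a := by field_simp
    rw [h2] at h
    linarith
  have hg20 : deriv (deriv G) 0 = 2 * b / 3 := by
    have h1 : HasDerivAt (fun y : ℝ => a ^ 3 / (a - b * y) ^ 2)
        (2 * a ^ 3 * b / (a - b * 0) ^ 3) 0 := hr1 0 (by simpa using ha0)
    have hg2d : HasDerivAt (deriv G) (deriv (deriv G) 0) 0 :=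
      (analyticAt_deriv hGa).differentiableAt.hasDerivAt
    have h2 := (hg2d.const_mul 2).add ((hasDerivAt_id (0:ℝ)).mul
        (analyticAt_deriv (analyticAt_deriv hGa)).differentiableAt.hasDerivAt)
    simp only [id_eq, one_mul, zero_mul, add_zero] at h2
    have h3 : HasDerivAt (fun y : ℝ => a ^ 3 / (a - b * y) ^ 2)
        (2 * deriv (deriv G) 0 + deriv (deriv G) 0) 0 :=
      h2.congr_of_eventuallyEq (E1.mono fun z hz => hz)
    have h4 := h1.unique h3
    have h5 : 2 * a ^ 3 * b / (a - b * 0) ^ 3 = 2 * b := by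
      simp only [mul_zero, sub_zero]
      field_simp
    rw [h5] at h4
    linarith
    -- A equals a nice function near 0
  set At : ℝ → ℝ := fun x => x + rfun a b x - (a - b * x) / a ^ 2 * G x with hAtdef
  have hAeq : Afun a b =ᶠ[nhds 0] At := by
    filter_upwards [hδev] with x hx
    by_cases hx0 : x = 0
    · subst hx0
      simp [Afun, hAtdef, rfun, hG0]
    · rw [Afun]
      rw [if_neg hx0, hAtdef]
      have hIx : ∫ t in x..0, rfun a b t = -(x * G x) := by
        rw [intervalIntegral.integral_symm, hInt x hx]
      rw [hIx]
      have hax : a - b * x ≠ 0 := hne x hx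
      have hrx : rfun a b x ≠ 0 := by
        rw [rfun]
        exact div_ne_zero (mul_ne_zero (pow_ne_zero 2 ha0) hx0) hax
      have key : (1 / rfun a b x) * (-(x * G x)) = -((a - b * x) / a ^ 2 * G x) := by
        rw [rfun]
        field_simp
      rw [key]
      ring
  -- derivative of At near 0
  have hAt' : ∀ y : ℝ, |y| < δ → AnalyticAt ℝ G y →
      HasDerivAt At (1 + a ^ 3 / (a - b * y) ^ 2 +
        (b / a ^ 2 * G y - (a - b * y) / a ^ 2 * deriv G y)) y := by
    intro y hy hGy
    have h2 : HasDerivAt (fun x : ℝ => a - b * x) (-b) y := by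
      simpa using ((hasDerivAt_id y).const_mul b).const_sub a
    have h1 : HasDerivAt (fun x : ℝ => (a - b * x) / a ^ 2) (-b / a ^ 2) y :=
      h2.div_const (a ^ 2)
    have h3 := h1.mul hGy.differentiableAt.hasDerivAt
    have h4 := ((hasDerivAt_id y).add (hr y (hne y hy))).sub h3
    rw [hAtdef]
    convert h4 using 1
    iterate 3 rfl
    ring
  have hA0 : HasDerivAt (Afun a b) (a + 1 / 2) 0 := by
    have h := hAt' 0 (by simpa using hδ) hGa
    rw [hG0, hg10] at h
    have hval : 1 + a ^ 3 / (a - b * 0) ^ 2 +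
        (b / a ^ 2 * 0 - (a - b * 0) / a ^ 2 * (a / 2)) = a + 1 / 2 := by
      simp only [mul_zero, sub_zero]
      field_simp
      ring
    rw [hval] at h
    exact h.congr_of_eventuallyEq hAeq
  -- second derivative
  set At1 : ℝ → ℝ := fun x => 1 + a ^ 3 / (a - b * x) ^ 2 +
      (b / a ^ 2 * G x - (a - b * x) / a ^ 2 * deriv G x) with hAt1def
  have hAderiv : deriv (Afun a b) =ᶠ[nhds 0] At1 := by
    apply hAeq.deriv.trans
    filter_upwards [hδev, hGev] with y hy hGy
    exact (hAt' y hy hGy).deriv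
  have hAt1' : HasDerivAt At1 (2 * b * (1 + 1 / (6 * a))) 0 := by
    have h2 : HasDerivAt (fun x : ℝ => a - b * x) (-b) 0 := by
      simpa using ((hasDerivAt_id (0:ℝ)).const_mul b).const_sub a
    have h1 : HasDerivAt (fun x : ℝ => (a - b * x) / a ^ 2) (-b / a ^ 2) 0 :=
      h2.div_const (a ^ 2)
    have hGd : HasDerivAt G (deriv G 0) 0 := hGa.differentiableAt.hasDerivAt
    have hg1d : HasDerivAt (deriv G) (deriv (deriv G) 0) 0 :=
      (analyticAt_deriv hGa).differentiableAt.hasDerivAt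
    have h5 := ((hasDerivAt_const (0:ℝ) (1:ℝ)).add (hr1 0 (by simpa using ha0))).add
      ((hGd.const_mul (b / a ^ 2)).sub (h1.mul hg1d))
    rw [hAt1def]
    convert h5 using 1
    iterate 3 rfl
    rw [hg10, hg20]
    simp only [mul_zero, sub_zero]
    field_simp
    ring
  have hA1 : HasDerivAt (deriv (Afun a b)) (2 * b * (1 + 1 / (6 * a))) 0 :=
    hAt1'.congr_of_eventuallyEq hAderiv
  -- B
  have hr00 : rfun a b 0 = 0 := by simp [rfun]
  have hrc : ContinuousAt (rfun a b) 0 := (hr 0 (by simpa using ha0)).continuousAt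
  have hrsmall : ∀ᶠ x in nhds (0:ℝ), |rfun a b x| < δ := by
    have htd := hrc.tendsto
    rw [hr00] at htd
    exact htd.eventually hδev
  have hBeq : Bfun a b =ᶠ[nhds 0] fun x => G (-(rfun a b x)) := by
    filter_upwards [hδev, hrsmall] with x hx hrx
    by_cases hx0 : x = 0
    · subst hx0
      simp [Bfun, hr00, hG0]
    · rw [Bfun, if_neg hx0]
      have hIx : ∫ s in (-(rfun a b x))..0, rfun a b s
          = rfun a b x * G (-(rfun a b x)) := by
        rw [intervalIntegral.integral_symm, hInt _ (by simpa using hrx)]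
        ring
      rw [hIx]
      have hax : a - b * x ≠ 0 := hne x hx
      have hrne : rfun a b x ≠ 0 := by
        rw [rfun]
        exact div_ne_zero (mul_ne_zero (pow_ne_zero 2 ha0) hx0) hax
      field_simp
  have hB0 : HasDerivAt (Bfun a b) (-a ^ 2 / 2) 0 := by
    have hinner : HasDerivAt (fun x => -(rfun a b x)) (-(a ^ 3 / (a - b * 0) ^ 2)) 0 :=
      (hr 0 (by simpa using ha0)).neg
    have hGd : HasDerivAt G (deriv G 0) (-(rfun a b 0)) := by
      rw [hr00, neg_zero]
      exact hGa.differentiableAt.hasDerivAt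
    have hcomp := hGd.comp 0 hinner
    have hval : deriv G 0 * -(a ^ 3 / (a - b * 0) ^ 2) = -a ^ 2 / 2 := by
      rw [hg10]
      simp only [mul_zero, sub_zero]
      field_simp
    rw [hval] at hcomp
    exact hcomp.congr_of_eventuallyEq hBeq
  exact ⟨⟨hA0.differentiableAt, hA0.deriv⟩, ⟨hA1.differentiableAt, hA1.deriv⟩,
    ⟨hB0.differentiableAt, hB0.deriv⟩⟩
end
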